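/- arXiv:1208.3139 — 6 statements merged into one kernel-verified Lean document; each statement's English description precedes it below -/
import Mathlib

section
/- Let T be a Krull–Schmidt triangulated category and let A → B₁ ⊕ B₂ → C → A[1] be a distinguished triangle with maps u = [u₁, u₂]ᵀ : A → B₁ ⊕ B₂ and v = [v₁, v₂] : B₁ ⊕ B₂ → C. If C is indecomposable and both v₁ and v₂ are nonzero, then Hom(A, C) ≠ 0; in fact v₁ ∘ u₁ ≠ 0. -/
open CategoryTheory CategoryTheory.Limits CategoryTheory.Pretriangulated

/-- An object of a category is indecomposable if it is nonzero and any biproduct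
decomposition of it has a zero summand. -/
def CatIndecomposable {C : Type*} [Category C] [Preadditive C] [HasBinaryBiproducts C]
    (X : C) : Prop :=
  ¬ IsZero X ∧ ∀ (Y Z : C), Nonempty (X ≅ Y ⊞ Z) → IsZero Y ∨ IsZero Z

/-- A Krull–Schmidt category: every indecomposable object has a local endomorphism
ring (so that every object decomposes into indecomposables with local endomorphism
rings). -/
def IsKrullSchmidtCat (C : Type*) [Category C] [Preadditive C] [HasBinaryBiproducts C] :
    Prop :=
  ∀ X : C, CatIndecomposable X → IsLocalRing (End X)

/-- Noncommutative version: in a local (possibly noncommutative) ring, if a sum is a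
unit then one of the summands is a unit. -/
lemma isUnit_or_isUnit_of_isUnit_add' {R : Type*} [Ring R] [IsLocalRing R] {a b : R}
    (h : IsUnit (a + b)) : IsUnit a ∨ IsUnit b := by
  obtain ⟨u, hu⟩ := h
  have h1 : (↑u⁻¹ * a) + (↑u⁻¹ * b) = 1 := by
    rw [← mul_add, ← hu, Units.inv_mul]
  rcases IsLocalRing.isUnit_or_isUnit_of_add_one h1 with h' | h'
  · left
    have := (u.isUnit).mul h'
    rwa [← mul_assoc, u.mul_inv, one_mul] at this
  · right
    have := (u.isUnit).mul h'
    rwa [← mul_assoc, u.mul_inv, one_mul] at this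

/-- Lemma 2.1: if `A → B₁ ⊕ B₂ → C → A[1]` is a distinguished triangle in a
Krull–Schmidt triangulated category, `C` is indecomposable and both components
`v₁, v₂` of the map `B₁ ⊕ B₂ → C` are nonzero, then `v₁ ∘ u₁ ≠ 0`; in particular
`Hom(A, C) ≠ 0`. -/
theorem stmt0 {C : Type*} [Category C] [Preadditive C] [HasZeroObject C]
    [HasBinaryBiproducts C] [HasShift C ℤ]
    [∀ n : ℤ, (shiftFunctor C n).Additive] [Pretriangulated C]
    (hKS : IsKrullSchmidtCat C)
    (A B₁ B₂ Cobj : C) (u₁ : A ⟶ B₁) (u₂ : A ⟶ B₂) (v₁ : B₁ ⟶ Cobj) (v₂ : B₂ ⟶ Cobj)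
    (w : Cobj ⟶ A⟦(1:ℤ)⟧)
    (hdist : Triangle.mk (biprod.lift u₁ u₂) (biprod.desc v₁ v₂) w ∈ distTriang C)
    (hC : CatIndecomposable Cobj) (hv₁ : v₁ ≠ 0) (hv₂ : v₂ ≠ 0) :
    u₁ ≫ v₁ ≠ 0 ∧ ∃ f : A ⟶ Cobj, f ≠ 0 := by
  have hlocal : IsLocalRing (End Cobj) := hKS Cobj hC
  have key : u₁ ≫ v₁ ≠ 0 := by
    intro h0
    -- composition of consecutive maps in the triangle is zero
    have hcomp : biprod.lift u₁ u₂ ≫ biprod.desc v₁ v₂ = 0 :=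
      comp_distTriang_mor_zero₁₂ _ hdist
    have hsum : u₁ ≫ v₁ + u₂ ≫ v₂ = 0 := by
      simpa [biprod.lift_desc] using hcomp
    have h0' : u₂ ≫ v₂ = 0 := by
      rw [h0, zero_add] at hsum; exact hsum
    -- factor (v₁, 0) and (0, v₂) through v
    obtain ⟨e, he⟩ : ∃ e : End Cobj, biprod.desc v₁ 0 = biprod.desc v₁ v₂ ≫ e :=
      Triangle.yoneda_exact₂ _ hdist (X := Cobj) (biprod.desc v₁ 0)
        (by show biprod.lift u₁ u₂ ≫ biprod.desc v₁ 0 = 0; simp [biprod.lift_desc, h0])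
    obtain ⟨e', he'⟩ : ∃ e' : End Cobj, biprod.desc 0 v₂ = biprod.desc v₁ v₂ ≫ e' :=
      Triangle.yoneda_exact₂ _ hdist (X := Cobj) (biprod.desc 0 v₂)
        (by show biprod.lift u₁ u₂ ≫ biprod.desc 0 v₂ = 0; simp [biprod.lift_desc, h0'])
    have hθ : biprod.desc v₁ v₂ ≫ (e + e') = biprod.desc v₁ v₂ := by
      rw [Preadditive.comp_add, ← he, ← he']
      ext <;> simp
    -- local ring argument
    have h1 : ((e + e') : End Cobj) + (1 - (e + e')) = 1 := by abel
    rcases IsLocalRing.isUnit_or_isUnit_of_add_one (R := End Cobj) h1 with hu | hu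
    · rcases isUnit_or_isUnit_of_isUnit_add' (a := e) (b := e') hu with hu' | hu'
      · -- e is iso, hence v₂ = 0
        have : IsIso (e : Cobj ⟶ Cobj) := (isUnit_iff_isIso (f := e)).1 hu'
        apply hv₂
        have : biprod.desc v₁ v₂ = biprod.desc v₁ 0 ≫ inv e := by
          rw [he]; simp
        have h2 := biprod.inr ≫= this
        simpa using h2
      · -- e' is iso, hence v₁ = 0
        have : IsIso (e' : Cobj ⟶ Cobj) := (isUnit_iff_isIso (f := e')).1 hu'
        apply hv₁
        have : biprod.desc v₁ v₂ = biprod.desc 0 v₂ ≫ inv e' := by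
          rw [he']; simp
        have h2 := biprod.inl ≫= this
        simpa using h2
    · -- 1 - (e + e') is iso, but v kills it, so v = 0
      have hiso : IsIso ((1 : End Cobj) - (e + e') : Cobj ⟶ Cobj) :=
        (isUnit_iff_isIso _).1 hu
      have hz : biprod.desc v₁ v₂ ≫ ((1 : End Cobj) - (e + e') : Cobj ⟶ Cobj) = 0 := by
        have : ((1 : End Cobj) : Cobj ⟶ Cobj) = 𝟙 Cobj := rfl
        rw [Preadditive.comp_sub, hθ, this, Category.comp_id, sub_self]
      have hv0 : biprod.desc v₁ v₂ = 0 := by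
        rw [← cancel_mono ((1 : End Cobj) - (e + e') : Cobj ⟶ Cobj), hz, zero_comp]
      apply hv₁
      have h2 := biprod.inl ≫= hv0
      simpa using h2
  exact ⟨key, ⟨u₁ ≫ v₁, key⟩⟩
end

section
/- Let Γ be a graded algebra and M an indecomposable non-projective graded Γ-module. If there exists a degree-zero endomorphism f : M → M that is neither zero nor an isomorphism, with image N and cokernel T of the inclusion N ↪ M, and if the induced map Ext¹(T, M)₀ → Ext¹(T, N)₀ is surjective, then there is a non-split short exact sequence of graded modules 0 → M → N ⊕ X → M → 0 for some graded module X; hence if Ext¹(M, M)₀ = 0 this yields a contradiction with the Krull–Remak–Schmidt theorem since N ≠ 0 has smaller length than M. -/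
noncomputable section

open DirectSum

/-- A `ℤ`-graded module over a `ℂ`-algebra `A` graded by `𝒜 : ℕ → Submodule ℂ A`,
with all structure maps compatible with the gradings. -/
structure GrMod {A : Type} [Ring A] [Algebra ℂ A] (𝒜 : ℕ → Submodule ℂ A) where
  M : Type
  [acg : AddCommGroup M]
  [modA : Module A M]
  [modC : Module ℂ M]
  [tower : IsScalarTower ℂ A M]
  gr : ℤ → Submodule ℂ M
  decomp : DirectSum.IsInternal gr
  smul_mem' : ∀ (d : ℕ) (i : ℤ) (s : A), s ∈ 𝒜 d → ∀ m ∈ gr i, s • m ∈ gr (i + d)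

attribute [instance] GrMod.acg GrMod.modA GrMod.modC GrMod.tower

variable {A : Type} [Ring A] [Algebra ℂ A] {𝒜 : ℕ → Submodule ℂ A}

/-- Degree-zero graded homomorphisms between graded modules. -/
@[ext] structure GrHom (X Y : GrMod 𝒜) where
  toFun : X.M →ₗ[A] Y.M
  map_gr : ∀ i, ∀ m ∈ X.gr i, toFun m ∈ Y.gr i

namespace GrHom

def comp {X Y Z : GrMod 𝒜} (g : GrHom Y Z) (f : GrHom X Y) : GrHom X Z :=
  ⟨g.toFun ∘ₗ f.toFun, fun i m hm => g.map_gr i _ (f.map_gr i m hm)⟩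

def id (X : GrMod 𝒜) : GrHom X X := ⟨LinearMap.id, fun _ _ hm => hm⟩

def zero (X Y : GrMod 𝒜) : GrHom X Y := ⟨0, fun i _ _ => (Y.gr i).zero_mem⟩

def sub {X Y : GrMod 𝒜} (f g : GrHom X Y) : GrHom X Y :=
  ⟨f.toFun - g.toFun, fun i m hm => by
    simpa using sub_mem (f.map_gr i m hm) (g.map_gr i m hm)⟩

end GrHom

/-- `0 → X → Y → Z → 0` is a short exact sequence of graded modules. -/
structure IsSES {X Y Z : GrMod 𝒜} (f : GrHom X Y) (g : GrHom Y Z) : Prop where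
  inj : Function.Injective f.toFun
  surj : Function.Surjective g.toFun
  exact : LinearMap.range f.toFun = LinearMap.ker g.toFun

/-- A short exact sequence of graded modules splits (via a degree-zero retraction). -/
def Splits {X Y Z : GrMod 𝒜} (f : GrHom X Y) (g : GrHom Y Z) : Prop :=
  ∃ r : GrHom Y X, r.comp f = GrHom.id X

/-- Vanishing of the degree-zero part of `Ext¹(Z, X)`:
every short exact sequence `0 → X → Y → Z → 0` of graded modules splits. -/
def Ext1Zero (Z X : GrMod 𝒜) : Prop :=
  ∀ (Y : GrMod 𝒜) (f : GrHom X Y) (g : GrHom Y Z), IsSES f g → Splits f g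

/-- A graded free module all of whose basis elements lie in degree `d`. -/
def IsFreeGenInDegree (P : GrMod 𝒜) (d : ℤ) : Prop :=
  ∃ (ι : Type) (b : Module.Basis ι A P.M), ∀ j, b j ∈ P.gr d

/-- A graded free module (a free module with a homogeneous basis). -/
def IsGradedFree (P : GrMod 𝒜) : Prop :=
  ∃ (ι : Type) (b : Module.Basis ι A P.M) (d : ι → ℤ), ∀ j, b j ∈ P.gr (d j)

/-- `X` has a linear presentation: a graded free presentation `P₁ → P₀ → X → 0`
with `P₀` generated in degree `0` and `P₁` generated in degree `1`. -/
def HasLinearPresentation (X : GrMod 𝒜) : Prop :=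
  ∃ (P₁ P₀ : GrMod 𝒜) (f : GrHom P₁ P₀) (p : GrHom P₀ X),
    IsFreeGenInDegree P₁ 1 ∧ IsFreeGenInDegree P₀ 0 ∧
    Function.Surjective p.toFun ∧ LinearMap.range f.toFun = LinearMap.ker p.toFun

/-- `X` is a linear (Koszul) module: it has a graded free resolution whose `k`-th
term is generated in degree `k`. -/
def IsLinearModule (X : GrMod 𝒜) : Prop :=
  ∃ (P : ℕ → GrMod 𝒜) (d : ∀ k, GrHom (P (k+1)) (P k)) (p : GrHom (P 0) X),
    (∀ k, IsFreeGenInDegree (P k) (k : ℤ)) ∧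
    Function.Surjective p.toFun ∧
    LinearMap.range (d 0).toFun = LinearMap.ker p.toFun ∧
    ∀ k, LinearMap.range (d (k+1)).toFun = LinearMap.ker (d k).toFun

/-- `Y` is the graded shift `X(i)` of `X`, i.e. `Y_k = X_{k+i}`. -/
def IsGradedShiftOf (Y X : GrMod 𝒜) (i : ℤ) : Prop :=
  ∃ e : Y.M ≃ₗ[A] X.M,
    (∀ k, ∀ m ∈ Y.gr k, e m ∈ X.gr (k + i)) ∧
    (∀ k, ∀ m ∈ X.gr (k + i), e.symm m ∈ Y.gr k)

/-- `ι : T → X` realizes `T` as the truncation `X_{≥ i}` of `X`. -/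
structure IsTruncation (X T : GrMod 𝒜) (i : ℤ) (ι : GrHom T X) : Prop where
  inj : Function.Injective ι.toFun
  low : ∀ k, k < i → T.gr k = ⊥
  onto : ∀ k, i ≤ k → ∀ m ∈ X.gr k, ∃ t ∈ T.gr k, ι.toFun t = m

/-- `C` is a semisimple graded module concentrated in the single degree `m`. -/
def IsSemisimpleInDegree (C : GrMod 𝒜) (m : ℤ) : Prop :=
  (∀ k, k ≠ m → C.gr k = ⊥) ∧
  ∀ (d : ℕ), 1 ≤ d → ∀ s ∈ 𝒜 d, ∀ x : C.M, s • x = 0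

/-- A graded submodule of a graded module. -/
def IsGradedSubmodule (X : GrMod 𝒜) (U : Submodule A X.M) : Prop :=
  U.restrictScalars ℂ = ⨆ i, (U.restrictScalars ℂ ⊓ X.gr i)

/-- Indecomposability of a graded module. -/
def GrIndecomposable (X : GrMod 𝒜) : Prop :=
  (∃ x : X.M, x ≠ 0) ∧
  ∀ U V : Submodule A X.M, IsGradedSubmodule X U → IsGradedSubmodule X V →
    IsCompl U V → U = ⊥ ∨ V = ⊥

/-- A graded isomorphism. -/
def IsGrIso {X Y : GrMod 𝒜} (f : GrHom X Y) : Prop :=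
  Function.Bijective f.toFun ∧ ∀ i, ∀ m ∈ Y.gr i, ∃ x ∈ X.gr i, f.toFun x = m

/-- `Z` is a (first) syzygy of `B`: there is a short exact sequence `0 → Z → P → B → 0`
with `P` graded free. -/
def IsSyzygyOf (Z B : GrMod 𝒜) : Prop :=
  ∃ (P : GrMod 𝒜) (j : GrHom Z P) (p : GrHom P B), IsGradedFree P ∧ IsSES j p

/-- `Z` is a `k`-th syzygy of `B`. -/
def IsIterSyzygyOf : ℕ → GrMod 𝒜 → GrMod 𝒜 → Prop
  | 0, Z, B => ∃ f : GrHom Z B, IsGrIso f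
  | (k+1), Z, B => ∃ W : GrMod 𝒜, IsSyzygyOf Z W ∧ IsIterSyzygyOf k W B

/-- A degree-zero map factors through a graded free module, i.e. it vanishes in the
stable category of graded modules. -/
def FactorsThroughFree {X Y : GrMod 𝒜} (f : GrHom X Y) : Prop :=
  ∃ (F : GrMod 𝒜) (g : GrHom X F) (h : GrHom F Y), IsGradedFree F ∧ h.comp g = f

/-- The polynomial ring `S = ℂ[x₀, …, xₙ]`. -/
abbrev PolyRing (n : ℕ) := MvPolynomial (Fin (n+1)) ℂ

/-- The standard grading of the polynomial ring. -/
abbrev polyGrading (n : ℕ) : ℕ → Submodule ℂ (PolyRing n) :=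
  fun d => MvPolynomial.homogeneousSubmodule (Fin (n+1)) ℂ d

/-- The exterior algebra `R = Λ(x₀, …, xₙ)` over `ℂ`. -/
abbrev ExtAlg (n : ℕ) := ExteriorAlgebra ℂ (Fin (n+1) → ℂ)

/-- The standard grading of the exterior algebra. -/
abbrev extGrading (n : ℕ) : ℕ → Submodule ℂ (ExtAlg n) :=
  fun d => LinearMap.range (ExteriorAlgebra.ι ℂ :
    (Fin (n+1) → ℂ) →ₗ[ℂ] ExtAlg n) ^ d

end

noncomputable section Helpers

open DirectSum

variable {A : Type} [Ring A] [Algebra ℂ A] {𝒜 : ℕ → Submodule ℂ A}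

/-- The range of a degree-zero graded map is a graded submodule. -/
lemma grhom_range_graded {X Y : GrMod 𝒜} (φ : GrHom X Y) :
    IsGradedSubmodule Y (LinearMap.range φ.toFun) := by
  refine le_antisymm ?_ (iSup_le fun i => inf_le_left)
  rintro y hy
  obtain ⟨m, rfl⟩ : ∃ m, φ.toFun m = y := hy
  have hm : m ∈ ⨆ i, X.gr i := by
    rw [X.decomp.submodule_iSup_eq_top]; trivial
  refine Submodule.iSup_induction (motive := fun m =>
      φ.toFun m ∈ ⨆ i, ((LinearMap.range φ.toFun).restrictScalars ℂ ⊓ Y.gr i)) _ hm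
    (fun i x hx => ?_) (by simp)
    (fun x y hx hy => by
      show φ.toFun (x + y) ∈ _
      rw [map_add]; exact add_mem hx hy)
  exact Submodule.mem_iSup_of_mem i ⟨⟨x, rfl⟩, φ.map_gr i x hx⟩

/-- The kernel of a degree-zero graded map is a graded submodule. -/
lemma grhom_ker_graded {X Y : GrMod 𝒜} (φ : GrHom X Y) :
    IsGradedSubmodule X (LinearMap.ker φ.toFun) := by
  classical
  refine le_antisymm ?_ (iSup_le fun i => inf_le_left)
  intro m hm
  have hm0 : φ.toFun m = 0 := hm
  set D := LinearEquiv.ofBijective (DirectSum.coeLinearMap X.gr) X.decomp with hD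
  set c := D.symm m with hc
  have hDc : DirectSum.coeLinearMap X.gr c = m := D.apply_symm_apply m
  have hrep : m = ∑ j ∈ DFinsupp.support c, ((c j : X.M)) := by
    rw [← hDc, DirectSum.coeLinearMap_eq_dfinsuppSum]
    rfl
  set c' : ⨁ i, (Y.gr i) := ∑ j ∈ DFinsupp.support c,
    DirectSum.of (fun i => ↥(Y.gr i)) j ⟨φ.toFun (c j), φ.map_gr j _ (c j).2⟩ with hc'
  have hc'0 : DirectSum.coeLinearMap Y.gr c' = 0 := by
    rw [hc', map_sum]
    simp only [DirectSum.coeLinearMap_of]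
    rw [← map_sum, ← hrep, hm0]
  set DY := LinearEquiv.ofBijective (DirectSum.coeLinearMap Y.gr) Y.decomp with hDY
  have hczero : c' = 0 := DY.injective (by
    show DirectSum.coeLinearMap Y.gr c' = DirectSum.coeLinearMap Y.gr 0
    rw [hc'0, map_zero])
  have hcomp : ∀ j, φ.toFun (c j) = 0 := by
    intro j
    by_cases hj : j ∈ DFinsupp.support c
    · have hval : DirectSum.component ℂ ℤ (fun i => ↥(Y.gr i)) j c'
          = ⟨φ.toFun (c j), φ.map_gr j _ (c j).2⟩ := by
        rw [hc', map_sum]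
        rw [Finset.sum_eq_single_of_mem j hj (fun k _ hk => by
          rw [← DirectSum.lof_eq_of ℂ, DirectSum.component.of, dif_neg hk])]
        rw [← DirectSum.lof_eq_of ℂ, DirectSum.component.lof_self]
      have h0 : DirectSum.component ℂ ℤ (fun i => ↥(Y.gr i)) j c' = 0 := by
        rw [hczero, map_zero]
      have : (⟨φ.toFun (c j), φ.map_gr j _ (c j).2⟩ : Y.gr j) = 0 :=
        hval.symm.trans h0
      exact congrArg Subtype.val this
    · have h0 : c j = 0 := DFinsupp.notMem_support_iff.mp hj
      rw [h0]
      simp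
  rw [hrep]
  exact Submodule.sum_mem _ fun j _ =>
    Submodule.mem_iSup_of_mem j ⟨hcomp j, (c j).2⟩

/-- The direct sum of two graded modules. -/
def prodGr (N X : GrMod 𝒜) : GrMod 𝒜 where
  M := N.M × X.M
  gr i := (N.gr i).prod (X.gr i)
  decomp := by
    rw [DirectSum.isInternal_submodule_iff_iSupIndep_and_iSup_eq_top]
    constructor
    · intro i
      refine Submodule.disjoint_def.mpr ?_
      rintro ⟨z1, z2⟩ hz hsup
      obtain ⟨h1, h2⟩ := Submodule.mem_prod.mp hz
      have hle : (⨆ j, ⨆ (_ : j ≠ i), (N.gr j).prod (X.gr j)) ≤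
          ((⨆ j, ⨆ (_ : j ≠ i), N.gr j).prod (⨆ j, ⨆ (_ : j ≠ i), X.gr j)) :=
        iSup_le fun j => iSup_le fun hj =>
          Submodule.prod_mono (le_iSup₂ (f := fun j _ => N.gr j) j hj)
            (le_iSup₂ (f := fun j _ => X.gr j) j hj)
      obtain ⟨hz1, hz2⟩ := Submodule.mem_prod.mp (hle hsup)
      have e1 : z1 = 0 :=
        Submodule.disjoint_def.mp (N.decomp.submodule_iSupIndep i) z1 h1 hz1
      have e2 : z2 = 0 :=
        Submodule.disjoint_def.mp (X.decomp.submodule_iSupIndep i) z2 h2 hz2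
      simp [e1, e2, Prod.ext_iff]
    · rw [eq_top_iff]
      rintro ⟨m, x⟩ -
      have hmN : m ∈ ⨆ i, N.gr i := by rw [N.decomp.submodule_iSup_eq_top]; trivial
      have hxX : x ∈ ⨆ i, X.gr i := by rw [X.decomp.submodule_iSup_eq_top]; trivial
      have h1 : ((m, 0) : N.M × X.M) ∈ ⨆ i, (N.gr i).prod (X.gr i) := by
        refine Submodule.iSup_induction (motive := fun m =>
            ((m, (0 : X.M)) : N.M × X.M) ∈ ⨆ i, (N.gr i).prod (X.gr i)) _ hmN
          (fun i y hy => Submodule.mem_iSup_of_mem i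
            (Submodule.mem_prod.mpr ⟨hy, (X.gr i).zero_mem⟩))
          (Submodule.zero_mem _) (fun a b ha hb => ?_)
        show ((a + b, (0 : X.M)) : N.M × X.M) ∈ _
        have : ((a + b, (0 : X.M)) : N.M × X.M) = (a, 0) + (b, 0) := by simp
        rw [this]; exact add_mem ha hb
      have h2 : ((0, x) : N.M × X.M) ∈ ⨆ i, (N.gr i).prod (X.gr i) := by
        refine Submodule.iSup_induction (motive := fun x =>
            (((0 : N.M), x) : N.M × X.M) ∈ ⨆ i, (N.gr i).prod (X.gr i)) _ hxX
          (fun i y hy => Submodule.mem_iSup_of_mem i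
            (Submodule.mem_prod.mpr ⟨(N.gr i).zero_mem, hy⟩))
          (Submodule.zero_mem _) (fun a b ha hb => ?_)
        show (((0 : N.M), a + b) : N.M × X.M) ∈ _
        have : (((0 : N.M), a + b) : N.M × X.M) = (0, a) + (0, b) := by simp
        rw [this]; exact add_mem ha hb
      have : ((m, x) : N.M × X.M) = (m, 0) + (0, x) := by simp
      rw [this]
      exact add_mem h1 h2
  smul_mem' := by
    rintro d i s hs ⟨m, x⟩ hmx
    obtain ⟨h1, h2⟩ := Submodule.mem_prod.mp hmx
    exact Submodule.mem_prod.mpr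
      ⟨N.smul_mem' d i s hs m h1, X.smul_mem' d i s hs x h2⟩

end Helpers

/-- Let `Γ` be a graded algebra and `M` an indecomposable non-projective graded
`Γ`-module of finite length.  Suppose `f : M → M` is a degree-zero endomorphism
which is neither zero nor an isomorphism, with image `N` (factored as a graded
epimorphism `e : M ↠ N` followed by a graded monomorphism `ι : N ↪ M`) and with
`T` the cokernel of `ι : N ↪ M`.  If the induced map
`Ext¹(T, M)₀ → Ext¹(T, N)₀` is surjective (every extension of `T` by `N` is the
pushout along `e` of an extension of `T` by `M`), then there is a non-split short
exact sequence `0 → M → E → M → 0` of graded modules where `E ≅ N ⊕ X`; hence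
`Ext¹(M, M)₀ ≠ 0`. -/
theorem stmt2 {A : Type} [Ring A] [Algebra ℂ A] {𝒜 : ℕ → Submodule ℂ A}
    (M : GrMod 𝒜) (hlen : IsFiniteLength A M.M)
    (hindec : GrIndecomposable M) (hnproj : ¬ Module.Projective A M.M)
    (f : GrHom M M) (hf0 : f.toFun ≠ 0) (hfni : ¬ Function.Bijective f.toFun)
    (N : GrMod 𝒜) (e : GrHom M N) (ι : GrHom N M)
    (he : Function.Surjective e.toFun) (hfact : ι.comp e = f)
    (T : GrMod 𝒜) (π : GrHom M T) (hT : IsSES ι π)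
    (hsurjExt : ∀ (Y : GrMod 𝒜) (a : GrHom N Y) (b : GrHom Y T), IsSES a b →
      ∃ (X : GrMod 𝒜) (a' : GrHom M X) (b' : GrHom X T) (g : GrHom X Y),
        IsSES a' b' ∧ g.comp a' = a.comp e ∧ b.comp g = b') :
    (∃ (E : GrMod 𝒜) (a : GrHom M E) (b : GrHom E M),
      IsSES a b ∧ ¬ Splits a b ∧
      ∃ (X : GrMod 𝒜) (i₁ : GrHom N E) (i₂ : GrHom X E)
        (p₁ : GrHom E N) (p₂ : GrHom E X),
        p₁.comp i₁ = GrHom.id N ∧ p₂.comp i₂ = GrHom.id X ∧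
        p₁.comp i₂ = GrHom.zero X N ∧ p₂.comp i₁ = GrHom.zero N X ∧
        ∀ m : E.M, i₁.toFun (p₁.toFun m) + i₂.toFun (p₂.toFun m) = m) ∧
    ¬ Ext1Zero M M := by
  classical
  obtain ⟨hNoeth, hArt⟩ := isFiniteLength_iff_isNoetherian_isArtinian.mp hlen
  haveI := hNoeth
  haveI := hArt
  obtain ⟨X, a', b', g, hses', hga', hbg⟩ := hsurjExt M ι π hT
  have hbg' : ∀ z, π.toFun (g.toFun z) = b'.toFun z := fun z =>
    LinearMap.congr_fun (congrArg GrHom.toFun hbg) z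
  have hga'' : ∀ m, g.toFun (a'.toFun m) = ι.toFun (e.toFun m) := fun m =>
    LinearMap.congr_fun (congrArg GrHom.toFun hga') m
  have hfeq : ∀ m, ι.toFun (e.toFun m) = f.toFun m := fun m =>
    LinearMap.congr_fun (congrArg GrHom.toFun hfact) m
  have hf_nsurj : ¬ Function.Surjective f.toFun := fun hs =>
    hfni ⟨IsNoetherian.injective_of_surjective_endomorphism f.toFun hs, hs⟩
  have hι_ne_top : LinearMap.range ι.toFun ≠ ⊤ := by
    intro htop
    apply hf_nsurj
    intro m
    have hmem : m ∈ LinearMap.range ι.toFun := htop ▸ Submodule.mem_top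
    obtain ⟨n, hn⟩ := hmem
    obtain ⟨m', hm'⟩ := he n
    exact ⟨m', by rw [← hfeq m', hm', hn]⟩
  set E := prodGr N X with hE
  set i₁ : GrHom N E := ⟨LinearMap.inl A N.M X.M, fun i m hm =>
    Submodule.mem_prod.mpr ⟨hm, (X.gr i).zero_mem⟩⟩ with hi₁
  set i₂ : GrHom X E := ⟨LinearMap.inr A N.M X.M, fun i m hm =>
    Submodule.mem_prod.mpr ⟨(N.gr i).zero_mem, hm⟩⟩ with hi₂
  set p₁ : GrHom E N := ⟨LinearMap.fst A N.M X.M, fun i m hm =>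
    (Submodule.mem_prod.mp hm).1⟩ with hp₁
  set p₂ : GrHom E X := ⟨LinearMap.snd A N.M X.M, fun i m hm =>
    (Submodule.mem_prod.mp hm).2⟩ with hp₂
  set a : GrHom M E := ⟨LinearMap.prod e.toFun a'.toFun, fun i m hm =>
    Submodule.mem_prod.mpr ⟨e.map_gr i m hm, a'.map_gr i m hm⟩⟩ with ha
  set b : GrHom E M := ⟨ι.toFun ∘ₗ LinearMap.fst A N.M X.M
      - g.toFun ∘ₗ LinearMap.snd A N.M X.M, fun i m hm => by
    have h := Submodule.mem_prod.mp hm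
    exact sub_mem (ι.map_gr i _ h.1) (g.map_gr i _ h.2)⟩ with hb
  have hbapp : ∀ z : E.M, b.toFun z = ι.toFun z.1 - g.toFun z.2 := fun z => rfl
  have haapp : ∀ m, a.toFun m = ((e.toFun m, a'.toFun m) : E.M) := fun m => rfl
  have hses_ab : IsSES a b := by
    refine ⟨?_, ?_, ?_⟩
    · intro x y hxy
      exact hses'.inj (congrArg Prod.snd hxy)
    · intro m
      obtain ⟨x, hx⟩ := hses'.surj (π.toFun m)
      have hker : m - g.toFun x ∈ LinearMap.ker π.toFun := by
        rw [LinearMap.mem_ker, map_sub, hbg', hx, sub_self]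
      rw [← hT.exact] at hker
      obtain ⟨n, hn⟩ := hker
      refine ⟨(n, -x), ?_⟩
      refine (hbapp _).trans ?_
      show ι.toFun n - g.toFun (-x) = m
      rw [map_neg, sub_neg_eq_add, hn]
      abel
    · apply le_antisymm
      · rintro z ⟨m, rfl⟩
        rw [LinearMap.mem_ker, hbapp]
        show ι.toFun (e.toFun m) - g.toFun (a'.toFun m) = 0
        rw [hga'' m, sub_self]
      · intro z hz
        have hz0 : ι.toFun z.1 - g.toFun z.2 = 0 := by
          have hz1 := LinearMap.mem_ker.mp hz
          rwa [hbapp] at hz1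
        have hz' : ι.toFun z.1 = g.toFun z.2 := sub_eq_zero.mp hz0
        have hbx : b'.toFun z.2 = 0 := by
          rw [← hbg' z.2, ← hz']
          have hmem : ι.toFun z.1 ∈ LinearMap.ker π.toFun := by
            rw [← hT.exact]; exact ⟨z.1, rfl⟩
          exact hmem
        have hx2 : z.2 ∈ LinearMap.range a'.toFun := by
          rw [hses'.exact]; exact hbx
        obtain ⟨m, hma'⟩ := hx2
        have hie : ι.toFun z.1 = ι.toFun (e.toFun m) := by
          rw [hz', ← hma', hga'' m]
        have hne : z.1 = e.toFun m := hT.inj hie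
        refine ⟨m, ?_⟩
        rw [haapp]
        exact Prod.ext hne.symm hma'
  have hnsplit : ¬ Splits a b := by
    rintro ⟨r, hr⟩
    have hrapp : ∀ m, r.toFun (a.toFun m) = m := fun m =>
      LinearMap.congr_fun (congrArg GrHom.toFun hr) m
    set k1 : GrHom X M := r.comp i₂ with hk1
    set u : GrHom M M := (r.comp i₁).comp e with hu
    have husum : ∀ m, u.toFun m + k1.toFun (a'.toFun m) = m := by
      intro m
      have h1 : ((e.toFun m, a'.toFun m) : E.M)
          = ((e.toFun m, 0) : E.M) + (((0 : N.M), a'.toFun m) : E.M) := by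
        show ((e.toFun m, a'.toFun m) : N.M × X.M) = _
        simp
      have h2 := hrapp m
      rw [haapp, h1] at h2
      exact (map_add r.toFun ((e.toFun m, 0) : E.M) ((0, a'.toFun m) : E.M)).symm.trans h2
    have hu_nsurj : ¬ Function.Surjective u.toFun := by
      intro hs
      have huinj : Function.Injective u.toFun :=
        IsNoetherian.injective_of_surjective_endomorphism u.toFun hs
      have hein : Function.Injective e.toFun := by
        intro x y hxy
        apply huinj
        show r.toFun (i₁.toFun (e.toFun x)) = r.toFun (i₁.toFun (e.toFun y))
        rw [hxy]
      have hfinj : Function.Injective f.toFun := by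
        intro x y hxy
        apply hein
        apply hT.inj
        rw [hfeq x, hfeq y]
        exact hxy
      exact hfni (IsArtinian.bijective_of_injective_endomorphism f.toFun hfinj)
    obtain ⟨n0, hn0⟩ := Filter.eventually_atTop.mp
      (LinearMap.eventually_isCompl_ker_pow_range_pow u.toFun)
    set nn := n0 + 1 with hnn
    have hcompl := hn0 nn (Nat.le_succ n0)
    have hpow_gr : ∀ (n : ℕ) (i : ℤ), ∀ m ∈ M.gr i, (u.toFun ^ n) m ∈ M.gr i := by
      intro n
      induction n with
      | zero => intro i m hm; simpa using hm
      | succ n ih =>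
        intro i m hm
        rw [pow_succ]
        exact ih i _ (u.map_gr i m hm)
    rcases hindec.2 (LinearMap.ker (u.toFun ^ nn)) (LinearMap.range (u.toFun ^ nn))
      (grhom_ker_graded ⟨u.toFun ^ nn, hpow_gr nn⟩)
      (grhom_range_graded ⟨u.toFun ^ nn, hpow_gr nn⟩) hcompl with hK | hR
    · have hinj : Function.Injective (u.toFun ^ nn) := by
        rw [← LinearMap.ker_eq_bot]; exact hK
      have huinj : Function.Injective u.toFun :=
        Module.End.injective_of_iterate_injective (Nat.succ_ne_zero n0) hinj
      exact hu_nsurj (IsArtinian.surjective_of_injective_endomorphism u.toFun huinj)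
    · have hnil : u.toFun ^ nn = 0 := LinearMap.range_eq_bot.mp hR
      set v : Module.End A M.M := ∑ j ∈ Finset.range nn, u.toFun ^ j with hv
      have hvmul : v * (1 - u.toFun) = 1 := by
        have hg := geom_sum_mul u.toFun nn
        calc v * (1 - u.toFun) = -(v * (u.toFun - 1)) := by
              rw [show (1 - u.toFun) = -(u.toFun - 1) from (neg_sub _ _).symm, mul_neg]
          _ = -(u.toFun ^ nn - 1) := by rw [hv, hg]
          _ = 1 := by rw [hnil, zero_sub, neg_neg]
      have hvgr : ∀ i, ∀ m ∈ M.gr i, v m ∈ M.gr i := by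
        intro i m hm
        have hvm : v m = ∑ j ∈ Finset.range nn, (u.toFun ^ j) m := by
          rw [hv]
          exact LinearMap.sum_apply _ _ m
        rw [hvm]
        exact Submodule.sum_mem _ fun j _ => hpow_gr j i m hm
      have hka : ∀ x, v ((1 - u.toFun) x) = x := by
        intro x
        have h2 := DFunLike.congr_fun hvmul x
        rwa [Module.End.mul_apply, Module.End.one_apply] at h2
      have hret : ∀ m, v (k1.toFun (a'.toFun m)) = m := by
        intro m
        have h1 : (1 - u.toFun) m = k1.toFun (a'.toFun m) := by
          have h2 : k1.toFun (a'.toFun m) = m - u.toFun m :=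
            eq_sub_of_add_eq' (husum m)
          rw [h2]
          simp [LinearMap.sub_apply]
        rw [← h1]
        exact hka m
      set pm : X.M →ₗ[A] M.M :=
        g.toFun - (g.toFun ∘ₗ a'.toFun ∘ₗ (v ∘ₗ k1.toFun)) with hpm
      have hpmapp : ∀ x, pm x = g.toFun x - g.toFun (a'.toFun (v (k1.toFun x))) :=
        fun x => rfl
      have hpa' : ∀ m, pm (a'.toFun m) = 0 := by
        intro m
        rw [hpmapp, hret m, sub_self]
      have hpπ : ∀ x, π.toFun (pm x) = b'.toFun x := by
        intro x
        rw [hpmapp, map_sub, hbg', hbg']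
        have hmem : a'.toFun (v (k1.toFun x)) ∈ LinearMap.ker b'.toFun := by
          rw [← hses'.exact]; exact ⟨_, rfl⟩
        rw [LinearMap.mem_ker] at hmem
        rw [hmem, sub_zero]
      have hpgr : ∀ i, ∀ x ∈ X.gr i, pm x ∈ M.gr i := by
        intro i x hx
        rw [hpmapp]
        exact sub_mem (g.map_gr i x hx)
          (g.map_gr i _ (a'.map_gr i _ (hvgr i _ (k1.map_gr i x hx))))
      have hcompl2 : IsCompl (LinearMap.range ι.toFun) (LinearMap.range pm) := by
        constructor
        · refine Submodule.disjoint_def.mpr ?_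
          rintro z ⟨n1, hn1⟩ ⟨x1, hx1⟩
          have hπz : π.toFun z = 0 := by
            rw [← hn1]
            have hmem : ι.toFun n1 ∈ LinearMap.ker π.toFun := by
              rw [← hT.exact]; exact ⟨n1, rfl⟩
            exact hmem
          have hbx1 : b'.toFun x1 = 0 := by rw [← hpπ x1, hx1, hπz]
          have hx2 : x1 ∈ LinearMap.range a'.toFun := by
            rw [hses'.exact]; exact hbx1
          obtain ⟨m1, rfl⟩ := hx2
          rw [← hx1, hpa' m1]
        · rw [codisjoint_iff_le_sup]
          rintro m -
          obtain ⟨x, hx⟩ := hses'.surj (π.toFun m)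
          have hker : m - pm x ∈ LinearMap.ker π.toFun := by
            rw [LinearMap.mem_ker, map_sub, hpπ, hx, sub_self]
          rw [← hT.exact] at hker
          obtain ⟨n1, hn1⟩ := hker
          have hm : m = ι.toFun n1 + pm x := by rw [hn1]; abel
          rw [hm]
          exact Submodule.add_mem_sup ⟨n1, rfl⟩ ⟨x, rfl⟩
      rcases hindec.2 _ _ (grhom_range_graded ι) (grhom_range_graded ⟨pm, hpgr⟩)
        hcompl2 with hI | hP
      · apply hf0
        apply LinearMap.ext
        intro m
        rw [LinearMap.zero_apply, ← hfeq m]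
        have hmem : ι.toFun (e.toFun m) ∈ LinearMap.range ι.toFun := ⟨_, rfl⟩
        rw [hI] at hmem
        exact (Submodule.mem_bot A).mp hmem
      · have hker_ne : LinearMap.ker π.toFun ≠ ⊤ := by
          rw [← hT.exact]; exact hι_ne_top
        have hex : ∃ m, π.toFun m ≠ 0 := by
          by_contra hall
          push_neg at hall
          apply hker_ne
          rw [eq_top_iff]
          intro m _
          exact hall m
        obtain ⟨m, hπm⟩ := hex
        obtain ⟨x, hx⟩ := hses'.surj (π.toFun m)
        have hpx : pm x = 0 := by
          have hmem : pm x ∈ LinearMap.range pm := ⟨x, rfl⟩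
          rw [hP] at hmem
          exact (Submodule.mem_bot A).mp hmem
        apply hπm
        rw [← hx, ← hpπ x, hpx, map_zero]
  refine ⟨⟨E, a, b, hses_ab, hnsplit, X, i₁, i₂, p₁, p₂, ?_, ?_, ?_, ?_, ?_⟩,
    fun hext => hnsplit (hext E a b hses_ab)⟩
  · exact GrHom.ext (LinearMap.ext fun x => rfl)
  · exact GrHom.ext (LinearMap.ext fun x => rfl)
  · exact GrHom.ext (LinearMap.ext fun x => rfl)
  · exact GrHom.ext (LinearMap.ext fun x => rfl)
  · intro z
    show ((z.1, (0 : X.M)) : N.M × X.M) + (((0 : N.M), z.2) : N.M × X.M) = z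
    simp [Prod.ext_iff]
    rfl
end

section
/- Let S = ℂ[x₀, …, xₙ] with graded maximal ideal J, and let 0 → M → E → N → 0 be a short exact sequence of graded S-modules, each having a linear presentation. Then the sequence splits if and only if the induced sequence 0 → M/J²M → E/J²E → N/J²N → 0 of S/J²-modules splits. -/
set_option maxHeartbeats 1000000


/-- The graded maximal ideal `J = (x₀, …, xₙ)` of the polynomial ring. -/
noncomputable def polyJ (n : ℕ) : Ideal (PolyRing n) :=
  Ideal.span (Set.range MvPolynomial.X)

/-- The submodule `J²X` of a graded module `X` over the polynomial ring. -/
noncomputable def JsqSub (n : ℕ) (X : GrMod (polyGrading n)) :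
    Submodule (PolyRing n) X.M :=
  (polyJ n ^ 2) • (⊤ : Submodule (PolyRing n) X.M)

/-- The map `X/J²X → Y/J²Y` induced by a degree-zero graded homomorphism. -/
noncomputable def redMap {n : ℕ} {X Y : GrMod (polyGrading n)} (f : GrHom X Y) :
    (X.M ⧸ JsqSub n X) →ₗ[PolyRing n] (Y.M ⧸ JsqSub n Y) :=
  Submodule.mapQ _ _ f.toFun (by
    refine Submodule.smul_le.2 fun s hs m _ => ?_
    simp only [Submodule.mem_comap, map_smul]
    exact Submodule.smul_mem_smul hs trivial)


namespace Stmt4Aux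

open DirectSum MvPolynomial

section general

variable {A : Type} [Ring A] [Algebra ℂ A] {𝒜 : ℕ → Submodule ℂ A}

lemma csmul (X : GrMod 𝒜) (c : ℂ) (x : X.M) : c • x = (algebraMap ℂ A c) • x :=
  (algebraMap_smul A c x).symm

noncomputable def proj (X : GrMod 𝒜) (k : ℤ) : X.M →ₗ[ℂ] X.M where
  toFun m := (((LinearEquiv.ofBijective (DirectSum.coeLinearMap X.gr) X.decomp).symm m) k : X.M)
  map_add' x y := by simp only [map_add, DirectSum.add_apply, Submodule.coe_add]
  map_smul' c x := by
    simp only [map_smul, RingHom.id_apply]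
    rfl

lemma proj_apply (X : GrMod 𝒜) (k : ℤ) (m : X.M) :
    proj X k m =
      (((LinearEquiv.ofBijective (DirectSum.coeLinearMap X.gr) X.decomp).symm m) k : X.M) := rfl

lemma proj_mem (X : GrMod 𝒜) (k : ℤ) (m : X.M) : proj X k m ∈ X.gr k := by
  rw [proj_apply]; exact Submodule.coe_mem _

lemma proj_of_mem (X : GrMod 𝒜) {k : ℤ} {m : X.M} (h : m ∈ X.gr k) : proj X k m = m := by
  rw [proj_apply, X.decomp.ofBijective_coeLinearMap_of_mem h]

lemma proj_of_ne (X : GrMod 𝒜) {j k : ℤ} {m : X.M} (h : m ∈ X.gr j) (hjk : j ≠ k) :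
    proj X k m = 0 := by
  rw [proj_apply, X.decomp.ofBijective_coeLinearMap_of_mem_ne hjk h]
  rfl

@[elab_as_elim] lemma grInduction (X : GrMod 𝒜) {P : X.M → Prop} (h0 : P 0)
    (hadd : ∀ x y, P x → P y → P (x + y))
    (hmem : ∀ (i : ℤ), ∀ m ∈ X.gr i, P m) (m : X.M) : P m :=
  Submodule.iSup_induction X.gr (motive := P)
    (by rw [X.decomp.submodule_iSup_eq_top]; exact Submodule.mem_top) hmem h0 hadd

lemma proj_smul (X : GrMod 𝒜) (d : ℕ) {s : A} (hs : s ∈ 𝒜 d) (k : ℤ) (m : X.M) :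
    proj X (k + d) (s • m) = s • proj X k m := by
  refine grInduction X ?_ ?_ ?_ m
  · simp
  · intro x y hx hy
    rw [smul_add, map_add, map_add, smul_add, hx, hy]
  · intro i m hm
    by_cases hik : i = k
    · subst hik
      rw [proj_of_mem X hm, proj_of_mem X (X.smul_mem' d i s hs m hm)]
    · rw [proj_of_ne X hm hik, smul_zero, proj_of_ne X (X.smul_mem' d i s hs m hm) (by omega)]

lemma proj_grHom {X Y : GrMod 𝒜} (g : GrHom X Y) (k : ℤ) (m : X.M) :
    proj Y k (g.toFun m) = g.toFun (proj X k m) := by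
  refine grInduction X ?_ ?_ ?_ m
  · simp
  · intro x y hx hy
    rw [map_add, map_add, map_add, map_add, hx, hy]
  · intro i m hm
    by_cases hik : i = k
    · subst hik
      rw [proj_of_mem X hm, proj_of_mem Y (g.map_gr i m hm)]
    · rw [proj_of_ne X hm hik, map_zero, proj_of_ne Y (g.map_gr i m hm) hik]

end general

section poly

variable {n : ℕ}

lemma hc_mem (d : ℕ) (a : PolyRing n) :
    homogeneousComponent d a ∈ polyGrading n d :=
  homogeneousComponent_isHomogeneous d a

lemma proj_smul_poly (X : GrMod (polyGrading n)) (a : PolyRing n) (k : ℤ) (m : X.M) :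
    proj X k (a • m) =
      ∑ d ∈ Finset.range (a.totalDegree + 1),
        homogeneousComponent d a • proj X (k - d) m := by
  conv_lhs => rw [← MvPolynomial.sum_homogeneousComponent a]
  rw [Finset.sum_smul, map_sum]
  refine Finset.sum_congr rfl fun d _ => ?_
  have h := proj_smul X d (hc_mem d a) (k - d) m
  rwa [show (k - (d:ℤ)) + d = k by ring] at h

lemma constJ {s : PolyRing n} (hs : s ∈ polyJ n) : constantCoeff s = 0 := by
  refine Submodule.span_induction (p := fun x _ => constantCoeff x = 0) ?_ ?_ ?_ ?_ hs
  · rintro x ⟨i, rfl⟩; simp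
  · simp
  · intro x y _ _ hx hy; rw [map_add, hx, hy, add_zero]
  · intro a x _ hx
    rw [smul_eq_mul, map_mul, hx, mul_zero]

lemma hcJ {s : PolyRing n} (hs : s ∈ polyJ n) : homogeneousComponent 0 s = 0 := by
  rw [homogeneousComponent_zero, show coeff 0 s = constantCoeff s from rfl, constJ hs, map_zero]

lemma degree_add (x y : Fin (n+1) →₀ ℕ) : (x + y).degree = x.degree + y.degree := by
  simp only [Finsupp.degree_eq_weight_one, map_add]

lemma degree_single (i : Fin (n+1)) : (Finsupp.single i 1).degree = 1 := by
  exact Finsupp.degree_single i 1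

lemma homog_mem_pow (d : ℕ) : ∀ a ∈ polyGrading n d, a ∈ polyJ n ^ d := by
  induction d with
  | zero => intro a _; rw [pow_zero, Ideal.one_eq_top]; exact Submodule.mem_top
  | succ d ih =>
    intro a ha
    rw [← MvPolynomial.support_sum_monomial_coeff a]
    refine Submodule.sum_mem _ fun u hu => ?_
    have hcoeff : coeff u a ≠ 0 := mem_support_iff.mp hu
    have hdeg : u.degree = d + 1 := by
      by_contra h
      exact hcoeff ((mem_homogeneousSubmodule _ _).mp ha |>.coeff_eq_zero h)
    obtain ⟨i, hi⟩ : ∃ i, u i ≠ 0 := by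
      by_contra h
      push_neg at h
      have hz : u = 0 := Finsupp.ext fun i => h i
      rw [hz, map_zero] at hdeg
      omega
    have hle : Finsupp.single i 1 ≤ u := by
      rw [Finsupp.single_le_iff]; omega
    have husum : Finsupp.single i 1 + (u - Finsupp.single i 1) = u := add_tsub_cancel_of_le hle
    have hdeg' : (u - Finsupp.single i 1).degree = d := by
      have h1 := degree_add (Finsupp.single i 1) (u - Finsupp.single i 1)
      rw [husum, degree_single] at h1
      omega
    have hmono : monomial u (coeff u a) = X i * monomial (u - Finsupp.single i 1) (coeff u a) := by
      conv_lhs => rw [← husum]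
      rw [monomial_single_add, pow_one, husum]
    rw [hmono, pow_succ']
    exact Ideal.mul_mem_mul (Ideal.subset_span ⟨i, rfl⟩)
      (ih _ ((mem_homogeneousSubmodule _ _).mpr (isHomogeneous_monomial _ hdeg')))

lemma proj_neg_eq_zero (X : GrMod (polyGrading n)) (hneg : ∀ j : ℤ, j < 0 → X.gr j = ⊥)
    (x : X.M) {j : ℤ} (hj : j < 0) : proj X j x = 0 := by
  have h := proj_mem X j x
  rw [hneg j hj] at h
  simpa using h

lemma proj_JsqSub (X : GrMod (polyGrading n)) (hneg : ∀ j : ℤ, j < 0 → X.gr j = ⊥)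
    {m : X.M} (hm : m ∈ JsqSub n X) : ∀ k : ℤ, k ≤ 1 → proj X k m = 0 := by
  refine Submodule.smul_induction_on hm ?_ ?_
  · intro r hr m' _
    rw [pow_two] at hr
    refine Submodule.mul_induction_on hr ?_ ?_
    · intro s hs t ht k hk
      rw [mul_smul, proj_smul_poly]
      refine Finset.sum_eq_zero fun d _ => ?_
      rcases Nat.eq_zero_or_pos d with h0 | h0
      · rw [h0, hcJ hs, zero_smul]
      · have hinner : proj X (k - d) (t • m') = 0 := by
          rw [proj_smul_poly]
          refine Finset.sum_eq_zero fun e _ => ?_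
          rcases Nat.eq_zero_or_pos e with h1 | h1
          · rw [h1, hcJ ht, zero_smul]
          · rw [proj_neg_eq_zero X hneg m' (by omega), smul_zero]
        rw [hinner, smul_zero]
    · intro x y hx hy k hk
      rw [add_smul, map_add, hx k hk, hy k hk, add_zero]
  · intro x y hx hy k hk
    rw [map_add, hx k hk, hy k hk, add_zero]

/-- `X` is generated in degree `0`. -/
def gen0 (X : GrMod (polyGrading n)) : Prop :=
  Submodule.span (PolyRing n) ((X.gr 0 : Set X.M)) = ⊤

lemma mem_span_gr0 {X : GrMod (polyGrading n)} (hgen : gen0 X) (m : X.M) :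
    m ∈ Submodule.span (PolyRing n) ((X.gr 0 : Set X.M)) := by
  rw [hgen]; exact Submodule.mem_top

lemma neg_eq_bot (X : GrMod (polyGrading n)) (hgen : gen0 X) :
    ∀ j : ℤ, j < 0 → X.gr j = ⊥ := by
  have key : ∀ m : X.M, ∀ j : ℤ, j < 0 → proj X j m = 0 := by
    intro m
    refine Submodule.span_induction (p := fun x _ => ∀ j : ℤ, j < 0 → proj X j x = 0)
      ?_ ?_ ?_ ?_ (mem_span_gr0 hgen m)
    · intro x hx j hj
      exact proj_of_ne X hx (by omega)
    · intro j hj; simp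
    · intro x y _ _ hx hy j hj
      rw [map_add, hx j hj, hy j hj, add_zero]
    · intro a x _ hx j hj
      rw [proj_smul_poly]
      exact Finset.sum_eq_zero fun d _ => by rw [hx (j - d) (by omega), smul_zero]
  intro j hj
  rw [eq_bot_iff]
  intro x hx
  have h := key x j hj
  rw [proj_of_mem X hx] at h
  simp [h]

lemma proj_mem_pow (X : GrMod (polyGrading n)) (hgen : gen0 X) :
    ∀ m : X.M, ∀ k : ℤ, 1 ≤ k →
      proj X k m ∈ (polyJ n ^ k.toNat) • (⊤ : Submodule (PolyRing n) X.M) := by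
  have hneg := neg_eq_bot X hgen
  intro m
  refine Submodule.span_induction
    (p := fun x _ => ∀ k : ℤ, 1 ≤ k →
      proj X k x ∈ (polyJ n ^ k.toNat) • (⊤ : Submodule (PolyRing n) X.M))
    ?_ ?_ ?_ ?_ (mem_span_gr0 hgen m)
  · intro x hx k hk
    rw [proj_of_ne X hx (by omega)]
    exact zero_mem _
  · intro k hk
    rw [map_zero]; exact zero_mem _
  · intro x y _ _ hx hy k hk
    rw [map_add]; exact add_mem (hx k hk) (hy k hk)
  · intro a x _ hx k hk
    rw [proj_smul_poly]
    refine Submodule.sum_mem _ fun d _ => ?_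
    by_cases h1 : 1 ≤ k - (d:ℤ)
    · have hmem := Submodule.smul_mem_smul (homog_mem_pow d _ (hc_mem d a)) (hx (k - d) h1)
      rw [← Submodule.smul_assoc] at hmem
      have harith : polyJ n ^ d • polyJ n ^ (k - (d:ℤ)).toNat = polyJ n ^ k.toNat := by
        rw [smul_eq_mul, ← pow_add]
        congr 1
        omega
      rwa [harith] at hmem
    · by_cases h0 : k - (d:ℤ) = 0
      · have hd : d = k.toNat := by omega
        rw [h0, hd]
        exact Submodule.smul_mem_smul (homog_mem_pow _ _ (hd ▸ hc_mem d a)) Submodule.mem_top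
      · rw [proj_neg_eq_zero X hneg x (by omega), smul_zero]
        exact zero_mem _

lemma gr_two_le_Jsq (X : GrMod (polyGrading n)) (hgen : gen0 X) :
    ∀ k : ℤ, 2 ≤ k → ∀ x ∈ X.gr k, x ∈ JsqSub n X := by
  intro k hk x hx
  have h := proj_mem_pow X hgen x k (by omega)
  rw [proj_of_mem X hx] at h
  have hle : (polyJ n ^ k.toNat) • (⊤ : Submodule (PolyRing n) X.M) ≤ JsqSub n X :=
    Submodule.smul_mono_left (Ideal.pow_le_pow_right (by omega))
  exact hle h

lemma residue_mem (X : GrMod (polyGrading n)) (hgen : gen0 X) (m : X.M) :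
    m - proj X 0 m - proj X 1 m ∈ JsqSub n X := by
  have hneg := neg_eq_bot X hgen
  have h2 := gr_two_le_Jsq X hgen
  refine grInduction X ?_ ?_ ?_ m
  · simpa using zero_mem (JsqSub n X)
  · intro x y hx hy
    have hexp : (x + y) - proj X 0 (x + y) - proj X 1 (x + y) =
        (x - proj X 0 x - proj X 1 x) + (y - proj X 0 y - proj X 1 y) := by
      rw [map_add, map_add]; abel
    rw [hexp]
    exact add_mem hx hy
  · intro i m hm
    rcases lt_trichotomy i 0 with h | h | h
    · have hz : m = 0 := by
        rw [hneg i h] at hm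
        simpa using hm
      simpa [hz] using zero_mem (JsqSub n X)
    · subst h
      rw [proj_of_mem X hm, proj_of_ne X hm (by omega)]
      simpa using zero_mem (JsqSub n X)
    · by_cases h1 : i = 1
      · subst h1
        rw [proj_of_mem X hm, proj_of_ne X hm (by omega)]
        simpa using zero_mem (JsqSub n X)
      · rw [proj_of_ne X hm (by omega), proj_of_ne X hm (by omega), sub_zero, sub_zero]
        exact h2 i (by omega) m hm

lemma gen0_of_basis {X : GrMod (polyGrading n)} {ι : Type} (b : Module.Basis ι (PolyRing n) X.M)
    (hb : ∀ j, b j ∈ X.gr 0) : gen0 X := by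
  rw [gen0, eq_top_iff, ← b.span_eq]
  exact Submodule.span_mono (by rintro y ⟨j, rfl⟩; exact hb j)

lemma gen0_of_surj {P X : GrMod (polyGrading n)} (p : GrHom P X)
    (hs : Function.Surjective p.toFun) (hP : gen0 P) : gen0 X := by
  rw [gen0, eq_top_iff]
  rintro x -
  obtain ⟨w, rfl⟩ := hs x
  have h1 : p.toFun w ∈ Submodule.map p.toFun
      (Submodule.span (PolyRing n) ((P.gr 0 : Set P.M))) :=
    ⟨w, mem_span_gr0 hP w, rfl⟩
  rw [Submodule.map_span] at h1
  refine Submodule.span_mono ?_ h1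
  rintro y ⟨z, hz, rfl⟩
  exact p.map_gr 0 z hz

lemma gr_le_spanW {X : GrMod (polyGrading n)} {ι : Type} (b : Module.Basis ι (PolyRing n) X.M)
    (hb : ∀ j, b j ∈ X.gr 0) (k : ℕ) {w : X.M} (hw : w ∈ X.gr (k : ℤ)) :
    w ∈ Submodule.span ℂ
      {v : X.M | ∃ (a : PolyRing n) (j : ι), a ∈ polyGrading n k ∧ v = a • b j} := by
  set W := Submodule.span ℂ
    {v : X.M | ∃ (a : PolyRing n) (j : ι), a ∈ polyGrading n k ∧ v = a • b j} with hW
  set V := Submodule.span ℂ {v : X.M | ∃ (a : PolyRing n) (j : ι), v = a • b j} with hV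
  have hsmulV : ∀ s : PolyRing n, ∀ v ∈ V, s • v ∈ V := by
    intro s v hv
    refine Submodule.span_induction (p := fun v _ => s • v ∈ V) ?_ ?_ ?_ ?_ hv
    · rintro x ⟨a, j, rfl⟩
      exact Submodule.subset_span ⟨s * a, j, (mul_smul s a (b j)).symm⟩
    · simp only [smul_zero]; exact zero_mem V
    · intro x y _ _ hx hy
      rw [smul_add]; exact add_mem hx hy
    · intro cc x _ hx
      rw [csmul X cc x, ← mul_smul, ← Algebra.commutes, mul_smul, ← csmul X cc (s • x)]
      exact Submodule.smul_mem _ cc hx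
  have hallV : ∀ v : X.M, v ∈ V := by
    intro v
    have hv : v ∈ Submodule.span (PolyRing n) (Set.range b) := by
      rw [b.span_eq]; exact Submodule.mem_top
    refine Submodule.span_induction (p := fun v _ => v ∈ V) ?_ ?_ ?_ ?_ hv
    · rintro x ⟨j, rfl⟩
      exact Submodule.subset_span ⟨1, j, (one_smul _ _).symm⟩
    · exact zero_mem V
    · intro x y _ _ hx hy; exact add_mem hx hy
    · intro a x _ hx; exact hsmulV a x hx
  have hproj : ∀ v ∈ V, proj X k v ∈ W := by
    intro v hv
    refine Submodule.span_induction (p := fun v _ => proj X k v ∈ W) ?_ ?_ ?_ ?_ hv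
    · rintro x ⟨a, j, rfl⟩
      rw [proj_smul_poly]
      refine Submodule.sum_mem _ fun d _ => ?_
      by_cases hd : d = k
      · subst hd
        rw [show (d:ℤ) - (d:ℤ) = 0 by ring, proj_of_mem X (hb j)]
        exact Submodule.subset_span ⟨homogeneousComponent d a, j, hc_mem d a, rfl⟩
      · rw [proj_of_ne X (hb j) (by omega), smul_zero]
        exact zero_mem W
    · rw [map_zero]; exact zero_mem W
    · intro x y _ _ hx hy; rw [map_add]; exact add_mem hx hy
    · intro cc x _ hx; rw [map_smul]; exact Submodule.smul_mem _ cc hx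
  have h := hproj w (hallV w)
  rwa [proj_of_mem X hw] at h

theorem retraction_exists (M E : GrMod (polyGrading n))
    (hM : HasLinearPresentation M) (hE : HasLinearPresentation E)
    (f : GrHom M E)
    (ρ : (E.M ⧸ JsqSub n E) →ₗ[PolyRing n] (M.M ⧸ JsqSub n M))
    (hρ : ρ ∘ₗ redMap f = LinearMap.id) :
    ∃ r : GrHom E M, r.comp f = GrHom.id M := by
  obtain ⟨P₁, P₀, fE, pE, ⟨ι₁, c, hcc⟩, ⟨ι₀, b, hb⟩, hpEs, hEex⟩ := hE
  obtain ⟨Q₁, Q₀, fM, pM, -, ⟨κ₀, bM, hbM⟩, hpMs, -⟩ := hM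
  have hgenP₀ : gen0 P₀ := gen0_of_basis b hb
  have hgenE : gen0 E := gen0_of_surj pE hpEs hgenP₀
  have hgenM : gen0 M := gen0_of_surj pM hpMs (gen0_of_basis bM hbM)
  have hnegM := neg_eq_bot M hgenM
  have hnegE := neg_eq_bot E hgenE
  -- choose lifts of `ρ` of the images of the basis elements
  have hchoice : ∀ j : ι₀, ∃ m : M.M,
      (Submodule.Quotient.mk m : M.M ⧸ JsqSub n M) =
        ρ (Submodule.Quotient.mk (pE.toFun (b j))) :=
    fun j => Submodule.Quotient.mk_surjective _ _
  choose mt hmt using hchoice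
  set mfun : ι₀ → M.M := fun j => proj M 0 (mt j) with hmfun
  set rt : P₀.M →ₗ[PolyRing n] M.M := b.constr ℕ mfun with hrt
  have hrtb : ∀ j, rt (b j) = proj M 0 (mt j) := by
    intro j; rw [hrt, Module.Basis.constr_basis, hmfun]
  -- the key computation on generators
  have keyj : ∀ (k : ℕ) (a : PolyRing n), a ∈ polyGrading n k → ∀ j : ι₀,
      (Submodule.Quotient.mk (rt (a • b j)) : M.M ⧸ JsqSub n M) -
          ρ (Submodule.Quotient.mk (pE.toFun (a • b j))) =
        Submodule.Quotient.mk (-(a • proj M 1 (mt j))) := by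
    intro k a ha j
    have h1 : rt (a • b j) = a • proj M 0 (mt j) := by rw [map_smul, hrtb]
    have h2 : pE.toFun (a • b j) = a • pE.toFun (b j) := map_smul _ _ _
    have h3 : (Submodule.Quotient.mk (proj M 0 (mt j)) : M.M ⧸ JsqSub n M) -
        Submodule.Quotient.mk (mt j) = Submodule.Quotient.mk (-(proj M 1 (mt j))) := by
      rw [← Submodule.Quotient.mk_sub]
      refine (Submodule.Quotient.eq _).mpr ?_
      have hres := neg_mem (residue_mem M hgenM (mt j))
      have hexp : proj M 0 (mt j) - mt j - -proj M 1 (mt j) =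
          -(mt j - proj M 0 (mt j) - proj M 1 (mt j)) := by abel
      rwa [← hexp] at hres
    rw [h1, h2, Submodule.Quotient.mk_smul, Submodule.Quotient.mk_smul, map_smul, ← hmt j,
      ← smul_sub, h3, ← Submodule.Quotient.mk_smul, smul_neg]
  -- key computation for homogeneous elements of `P₀`
  have hC : ∀ (k : ℕ), ∀ w ∈ P₀.gr (k : ℤ),
      ∃ v ∈ M.gr (1 + k : ℤ),
        (Submodule.Quotient.mk (rt w) : M.M ⧸ JsqSub n M) -
          ρ (Submodule.Quotient.mk (pE.toFun w)) = Submodule.Quotient.mk v := by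
    intro k w hw
    refine Submodule.span_induction
      (p := fun w _ => ∃ v ∈ M.gr (1 + k : ℤ),
        (Submodule.Quotient.mk (rt w) : M.M ⧸ JsqSub n M) -
          ρ (Submodule.Quotient.mk (pE.toFun w)) = Submodule.Quotient.mk v)
      ?_ ?_ ?_ ?_ (gr_le_spanW b hb k hw)
    · rintro x ⟨a, j, ha, rfl⟩
      refine ⟨-(a • proj M 1 (mt j)), ?_, keyj k a ha j⟩
      have := M.smul_mem' k 1 a ha _ (proj_mem M 1 (mt j))
      exact neg_mem this
    · exact ⟨0, zero_mem _, by simp⟩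
    · rintro x y _ _ ⟨v, hv, hx⟩ ⟨v', hv', hy⟩
      refine ⟨v + v', add_mem hv hv', ?_⟩
      rw [map_add, map_add, Submodule.Quotient.mk_add, Submodule.Quotient.mk_add,
        Submodule.Quotient.mk_add, map_add, ← hx, ← hy]
      abel
    · rintro cc x _ ⟨v, hv, hx⟩
      refine ⟨cc • v, Submodule.smul_mem _ cc hv, ?_⟩
      rw [csmul P₀ cc x, map_smul, map_smul, Submodule.Quotient.mk_smul,
        Submodule.Quotient.mk_smul, map_smul, ← smul_sub, hx, ← Submodule.Quotient.mk_smul,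
        csmul M cc v]
  -- `rt` is graded
  have hgr : ∀ (k : ℕ), ∀ w ∈ P₀.gr (k : ℤ), rt w ∈ M.gr (k : ℤ) := by
    intro k w hw
    refine Submodule.span_induction (p := fun w _ => rt w ∈ M.gr (k : ℤ))
      ?_ ?_ ?_ ?_ (gr_le_spanW b hb k hw)
    · rintro x ⟨a, j, ha, rfl⟩
      rw [map_smul, hrtb]
      have := M.smul_mem' k 0 a ha _ (proj_mem M 0 (mt j))
      simpa using this
    · simp only [map_zero]; exact zero_mem _
    · intro x y _ _ hx hy; rw [map_add]; exact add_mem hx hy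
    · intro cc x _ hx
      rw [csmul P₀ cc x, map_smul, ← csmul M cc (rt x)]
      exact Submodule.smul_mem _ cc hx
  -- homogeneous preimages along `pE`
  have hgrE : ∀ (k : ℤ) (x : E.M), x ∈ E.gr k → ∃ w ∈ P₀.gr k, pE.toFun w = x := by
    intro k x hx
    obtain ⟨w₀, hw₀⟩ := hpEs x
    refine ⟨proj P₀ k w₀, proj_mem P₀ k w₀, ?_⟩
    rw [← proj_grHom pE k w₀, hw₀, proj_of_mem E hx]
  -- `rt` kills the kernel of `pE`
  have hker : LinearMap.ker pE.toFun ≤ LinearMap.ker rt := by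
    intro w hw
    rw [← hEex] at hw
    rw [LinearMap.mem_ker]
    obtain ⟨v, rfl⟩ := hw
    have hv : v ∈ Submodule.span (PolyRing n) (Set.range c) := by
      rw [c.span_eq]; exact Submodule.mem_top
    refine Submodule.span_induction (p := fun v _ => rt (fE.toFun v) = 0) ?_ ?_ ?_ ?_ hv
    · rintro x ⟨t, rfl⟩
      have hw1 : fE.toFun (c t) ∈ P₀.gr ((1 : ℕ) : ℤ) := by
        exact_mod_cast fE.map_gr 1 _ (hcc t)
      have hp0 : pE.toFun (fE.toFun (c t)) = 0 := by
        have hmem : fE.toFun (c t) ∈ LinearMap.ker pE.toFun :=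
          hEex ▸ LinearMap.mem_range_self _ _
        exact hmem
      obtain ⟨v', hv', heq⟩ := hC 1 (fE.toFun (c t)) hw1
      rw [hp0, Submodule.Quotient.mk_zero, map_zero, sub_zero] at heq
      have hmem2 : rt (fE.toFun (c t)) - v' ∈ JsqSub n M := (Submodule.Quotient.eq _).mp heq
      have h4 := proj_JsqSub M hnegM hmem2 1 le_rfl
      rw [map_sub, proj_of_mem M (by exact_mod_cast hgr 1 _ hw1),
        proj_of_ne M hv' (by norm_num)] at h4
      simpa using h4
    · simp
    · intro x y _ _ hx hy; rw [map_add, map_add, hx, hy, add_zero]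
    · intro a x _ hx; rw [map_smul, map_smul, hx, smul_zero]
  -- descend `rt` to a map `E → M`
  set rE : E.M →ₗ[PolyRing n] M.M :=
    (Submodule.liftQ _ rt hker) ∘ₗ
      (LinearMap.quotKerEquivOfSurjective pE.toFun hpEs).symm.toLinearMap with hrE
  have hrE_pE : ∀ w, rE (pE.toFun w) = rt w := by
    intro w
    have h1 : (LinearMap.quotKerEquivOfSurjective pE.toFun hpEs).symm (pE.toFun w) =
        Submodule.Quotient.mk w := by
      rw [LinearEquiv.symm_apply_eq]
      rfl
    rw [hrE]
    simp only [LinearMap.coe_comp, Function.comp_apply, LinearEquiv.coe_coe]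
    rw [h1, Submodule.liftQ_apply]
  have hrE_gr : ∀ (i : ℤ), ∀ x ∈ E.gr i, rE x ∈ M.gr i := by
    intro i x hx
    rcases lt_or_ge i 0 with h | h
    · have hz : x = 0 := by
        rw [hnegE i h] at hx
        simpa using hx
      rw [hz, map_zero]; exact zero_mem _
    · lift i to ℕ using h with k
      obtain ⟨w, hw, hwx⟩ := hgrE _ x hx
      rw [← hwx, hrE_pE w]
      exact hgr k w hw
  refine ⟨⟨rE, hrE_gr⟩, ?_⟩
  have hfinal : ∀ x ∈ M.gr 0, rE (f.toFun x) = x := by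
    intro x hx
    have hfx : f.toFun x ∈ E.gr 0 := f.map_gr 0 x hx
    obtain ⟨w, hw, hwx⟩ := hgrE 0 (f.toFun x) hfx
    obtain ⟨v, hv, heq⟩ := hC 0 w (by exact_mod_cast hw)
    rw [hwx] at heq
    have hρx : ρ (Submodule.Quotient.mk (f.toFun x)) = Submodule.Quotient.mk x := by
      have h5 := LinearMap.congr_fun hρ (Submodule.Quotient.mk x)
      rw [LinearMap.comp_apply] at h5
      rw [show redMap f (Submodule.Quotient.mk x) =
        (Submodule.Quotient.mk (f.toFun x) : E.M ⧸ JsqSub n E) from Submodule.mapQ_apply _ _ _ _] at h5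
      exact h5
    rw [hρx] at heq
    have hmem : rt w - x - v ∈ JsqSub n M := by
      have h7 : (Submodule.Quotient.mk (rt w - x) : M.M ⧸ JsqSub n M) =
          Submodule.Quotient.mk v := by
        rw [Submodule.Quotient.mk_sub]; exact heq
      exact (Submodule.Quotient.eq _).mp h7
    have h4 := proj_JsqSub M hnegM hmem 0 (by norm_num)
    have hrtw : rt w ∈ M.gr 0 := by exact_mod_cast hgr 0 w (by exact_mod_cast hw)
    rw [map_sub, map_sub, proj_of_mem M hrtw, proj_of_mem M hx,
      proj_of_ne M hv (by norm_num)] at h4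
    have h6 : rt w = x := by
      have := sub_eq_zero.mp (by simpa using h4)
      exact this
    rw [← hwx, hrE_pE w, h6]
  have hall : ∀ x : M.M, rE (f.toFun x) = x := by
    intro x
    refine Submodule.span_induction (p := fun x _ => rE (f.toFun x) = x)
      ?_ ?_ ?_ ?_ (mem_span_gr0 hgenM x)
    · exact fun x hx => hfinal x hx
    · simp
    · intro x y _ _ hx hy; rw [map_add, map_add, hx, hy]
    · intro a x _ hx; rw [map_smul, map_smul, hx]
  exact GrHom.ext (LinearMap.ext hall)

end poly

end Stmt4Aux

/-- Lemma 1.1: a short exact sequence `0 → M → E → N → 0` of graded `S`-modules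
with linear presentations splits if and only if the induced short exact sequence
`0 → M/J²M → E/J²E → N/J²N → 0` of `S/J²`-modules splits. -/
theorem stmt4 {n : ℕ} (M E N : GrMod (polyGrading n))
    (hM : HasLinearPresentation M) (hE : HasLinearPresentation E)
    (hN : HasLinearPresentation N)
    (f : GrHom M E) (g : GrHom E N) (hses : IsSES f g) :
    Splits f g ↔
      ∃ ρ : (E.M ⧸ JsqSub n E) →ₗ[PolyRing n] (M.M ⧸ JsqSub n M),
        ρ ∘ₗ redMap f = LinearMap.id := by
  constructor
  · rintro ⟨r, hr⟩
    refine ⟨redMap r, ?_⟩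
    apply LinearMap.ext
    intro x
    obtain ⟨y, rfl⟩ := Submodule.Quotient.mk_surjective _ x
    have h1 : r.toFun (f.toFun y) = y := by
      have h2 := congrArg GrHom.toFun hr
      simpa [GrHom.comp, GrHom.id] using LinearMap.congr_fun h2 y
    rw [LinearMap.comp_apply, LinearMap.id_apply,
      show redMap f (Submodule.Quotient.mk y) =
        (Submodule.Quotient.mk (f.toFun y) : E.M ⧸ JsqSub n E) from Submodule.mapQ_apply _ _ _ _,
      show redMap r (Submodule.Quotient.mk (f.toFun y)) =
        (Submodule.Quotient.mk (r.toFun (f.toFun y)) : M.M ⧸ JsqSub n M) from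
        Submodule.mapQ_apply _ _ _ _, h1]
  · rintro ⟨ρ, hρ⟩
    exact Stmt4Aux.retraction_exists M E hM hE f ρ hρ
end

section
/- Let S = ℂ[x₀,…,xₙ] and let 0 → A → B → C → 0 be a short exact sequence of finitely generated graded S-modules where A is a Koszul (linear) module and C is semisimple concentrated in a single degree m ≥ 0. Then the sequence splits. -/
section Helpers

open Finset DirectSum

noncomputable section

namespace GrModAux

variable {n : ℕ}

/-- Sign convention for Koszul-type differentials indexed by finsets. -/
def sgn (i : Fin (n+1)) (T : Finset (Fin (n+1))) : ℤ :=
  (-1) ^ (T.filter (fun j => j < i)).card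

lemma sgn_mul_self (i : Fin (n+1)) (T : Finset (Fin (n+1))) : sgn i T * sgn i T = 1 := by
  unfold sgn
  rw [← pow_add, ← two_mul, pow_mul]
  norm_num

lemma sgn_erase_of_not_lt {i j : Fin (n+1)} (h : ¬ i < j) (T : Finset (Fin (n+1))) :
    sgn j (T.erase i) = sgn j T := by
  unfold sgn
  rw [Finset.filter_erase, Finset.erase_eq_of_notMem]
  simp [h]

lemma sgn_erase_of_lt {i j : Fin (n+1)} (h : j < i) {T : Finset (Fin (n+1))} (hj : j ∈ T) :
    sgn i (T.erase j) = - sgn i T := by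
  unfold sgn
  rw [Finset.filter_erase, Finset.card_erase_of_mem (by simp [hj, h])]
  have hc : 0 < (T.filter (fun x => x < i)).card :=
    Finset.card_pos.2 ⟨j, by simp [hj, h]⟩
  obtain ⟨c, hcc⟩ : ∃ c, (T.filter (fun x => x < i)).card = c + 1 :=
    ⟨_, (Nat.succ_pred_eq_of_pos hc).symm⟩
  rw [hcc, Nat.add_sub_cancel, pow_succ]
  ring

lemma sgn_key {U : Finset (Fin (n+1))} {i j : Fin (n+1)} (hi : i ∈ U) (hj : j ∈ U)
    (hij : i ≠ j) :
    sgn i (U.erase j) * sgn j (U.erase i) = -(sgn i U * sgn j U) := by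
  rcases lt_or_gt_of_ne hij with h | h
  · rw [sgn_erase_of_not_lt (asymm h), sgn_erase_of_lt h hi]
    ring
  · rw [sgn_erase_of_lt h hj, sgn_erase_of_not_lt (asymm h)]
    ring

lemma sgn_key' {T : Finset (Fin (n+1))} {i j : Fin (n+1)} (hi : i ∈ T) (hj : j ∈ T)
    (hij : i ≠ j) :
    sgn i T * sgn j (T.erase i) = -(sgn j T * sgn i (T.erase j)) := by
  have key : ∀ (i j : Fin (n+1)), i ∈ T → j ∈ T → j < i →
      sgn i T * sgn j (T.erase i) = -(sgn j T * sgn i (T.erase j)) := by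
    intro i j hi hj h
    rw [sgn_erase_of_not_lt (asymm h), sgn_erase_of_lt h hj]
    ring
  rcases lt_or_gt_of_ne hij with h | h
  · have := key j i hj hi h
    linarith [this]
  · exact key i j hi hj h

variable {X Y : GrMod (polyGrading n)}

lemma exists_decomp (X : GrMod (polyGrading n)) (x : X.M) :
    ∃ (s : Finset ℤ) (w : ℤ → X.M), (∀ e, w e ∈ X.gr e) ∧ x = ∑ e ∈ s, w e := by
  classical
  obtain ⟨y, hy⟩ := X.decomp.surjective x
  refine ⟨DFinsupp.support y, fun e => (y e : X.M), fun e => (y e).2, ?_⟩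
  rw [← hy]
  conv_lhs => rw [← DirectSum.sum_support_of y]
  rw [map_sum]
  exact Finset.sum_congr rfl fun e _ => by rw [DirectSum.coeAddMonoidHom_of]

lemma components_eq {X : GrMod (polyGrading n)} {s : Finset ℤ} {w : ℤ → X.M}
    (hw : ∀ e, w e ∈ X.gr e) {i : ℤ} {x : X.M} (hx : x ∈ X.gr i)
    (hsum : ∑ e ∈ s, w e = x) : ∀ e ∈ s, e ≠ i → w e = 0 := by
  classical
  set u : ⨁ e, X.gr e := ∑ e ∈ s, DirectSum.of (fun e => X.gr e) e ⟨w e, hw e⟩ with hu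
  have h1 : DirectSum.coeAddMonoidHom X.gr u = x := by
    rw [hu, map_sum, ← hsum]
    exact Finset.sum_congr rfl fun e _ => by rw [DirectSum.coeAddMonoidHom_of]
  have h2 : DirectSum.coeAddMonoidHom X.gr (DirectSum.of (fun e => X.gr e) i ⟨x, hx⟩) = x :=
    DirectSum.coeAddMonoidHom_of _ _ _
  have h3 : u = DirectSum.of (fun e => X.gr e) i ⟨x, hx⟩ :=
    X.decomp.injective (h1.trans h2.symm)
  intro e he hei
  have h4 : u e = 0 := by
    rw [h3]; exact DirectSum.of_eq_of_ne _ _ _ hei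
  have h5 : u e = ∑ e' ∈ s, (DirectSum.of (fun e => X.gr e) e' ⟨w e', hw e'⟩) e := by
    rw [hu]; exact DFinsupp.finset_sum_apply _ _ _
  have h7 : ∑ e' ∈ s, (DirectSum.of (fun e => X.gr e) e' ⟨w e', hw e'⟩) e
      = (DirectSum.of (fun e => X.gr e) e ⟨w e, hw e⟩) e :=
    Finset.sum_eq_single e (fun b _ hb => DirectSum.of_eq_of_ne _ _ _ (Ne.symm hb))
      (fun h => absurd he h)
  have h8 : (⟨w e, hw e⟩ : X.gr e) = 0 := by
    have h9 := (DirectSum.of_eq_same (β := fun e => X.gr e) e (⟨w e, hw e⟩ : X.gr e)).symm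
    rw [h9, ← h7, ← h5, h4]
  exact congrArg Subtype.val h8

lemma sum_piece {X : GrMod (polyGrading n)} {s : Finset ℤ} {w : ℤ → X.M}
    (hw : ∀ e, w e ∈ X.gr e) {i : ℤ} {x : X.M} (hx : x ∈ X.gr i)
    (hsum : ∑ e ∈ s, w e = x) : x = if i ∈ s then w i else 0 := by
  have h0 := components_eq hw hx hsum
  by_cases hi : i ∈ s
  · simp only [hi, if_true]
    rw [← hsum]
    exact Finset.sum_eq_single i (fun b hb hbi => h0 b hb hbi) (fun h => absurd hi h)
  · simp only [hi, if_false]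
    rw [← hsum]
    exact Finset.sum_eq_zero fun e he => h0 e he (fun h => hi (h ▸ he))

lemma mem_range_piece {X Y : GrMod (polyGrading n)} (φ : GrHom X Y) {i : ℤ} {y : Y.M}
    (hy : y ∈ Y.gr i) (hr : y ∈ LinearMap.range φ.toFun) :
    ∃ x ∈ X.gr i, φ.toFun x = y := by
  obtain ⟨x₀, hx₀⟩ := hr
  obtain ⟨s, w, hw, hsum⟩ := exists_decomp X x₀
  have h1 : ∑ e ∈ s, φ.toFun (w e) = y := by
    rw [← map_sum, ← hsum, hx₀]
  have h2 := sum_piece (fun e => φ.map_gr e _ (hw e)) hy h1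
  by_cases hi : i ∈ s
  · exact ⟨w i, hw i, by rw [h2, if_pos hi]⟩
  · exact ⟨0, (X.gr i).zero_mem, by rw [map_zero, h2, if_neg hi]⟩

lemma surj_piece {X Y : GrMod (polyGrading n)} (φ : GrHom X Y)
    (h : Function.Surjective φ.toFun) {i : ℤ} {y : Y.M} (hy : y ∈ Y.gr i) :
    ∃ x ∈ X.gr i, φ.toFun x = y :=
  mem_range_piece φ hy (by obtain ⟨x, hx⟩ := h y; exact ⟨x, hx⟩)

lemma inj_piece {X Y : GrMod (polyGrading n)} (φ : GrHom X Y)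
    (hφ : Function.Injective φ.toFun) {i : ℤ} {x : X.M}
    (hx : φ.toFun x ∈ Y.gr i) : x ∈ X.gr i := by
  obtain ⟨s, w, hw, hsum⟩ := exists_decomp X x
  have h1 : ∑ e ∈ s, φ.toFun (w e) = φ.toFun x := by rw [← map_sum, ← hsum]
  have h2 := components_eq (fun e => φ.map_gr e _ (hw e)) hx h1
  have h3 : x = if i ∈ s then w i else 0 := by
    by_cases hi : i ∈ s
    · simp only [hi, if_true]
      rw [hsum]
      exact Finset.sum_eq_single i (fun b hb hbi => hφ (by rw [h2 b hb hbi, map_zero]))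
        (fun h => absurd hi h)
    · simp only [hi, if_false]
      rw [hsum]
      exact Finset.sum_eq_zero fun e he => hφ (by rw [h2 e he (fun h => hi (h ▸ he)), map_zero])
  rw [h3]
  split
  · exact hw i
  · exact (X.gr i).zero_mem

end GrModAux

end
end Helpers
section PolyLemmas

open MvPolynomial

namespace GrModAux

variable {N : ℕ}

private lemma finsupp_degree_add (u v : Fin N →₀ ℕ) :
    (u + v).degree = u.degree + v.degree := by
  have := DFunLike.congr_fun Finsupp.degree_eq_weight_one (u + v)
  have hu := DFunLike.congr_fun Finsupp.degree_eq_weight_one u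
  have hv := DFunLike.congr_fun Finsupp.degree_eq_weight_one v
  simp only [this, hu, hv, map_add]

private lemma finsupp_degree_single (i : Fin N) : (Finsupp.single i 1).degree = 1 := by
  exact Finsupp.degree_single i 1

private lemma sub_single_add {v : Fin N →₀ ℕ} {i : Fin N} (h : v i ≠ 0) :
    (v - Finsupp.single i 1) + Finsupp.single i 1 = v := by
  ext j
  by_cases hj : j = i
  · subst hj
    simp [Finsupp.tsub_apply, Nat.sub_add_cancel (Nat.one_le_iff_ne_zero.2 h)]
  · simp [Finsupp.tsub_apply, Finsupp.single_apply, Ne.symm hj]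

private lemma X_mul_monomial' (i : Fin N) (v : Fin N →₀ ℕ) (a : ℂ) :
    X i * monomial v a = monomial (v + Finsupp.single i 1) a := by
  rw [add_comm, monomial_single_add, pow_one]

lemma euler {e : ℕ} {q : MvPolynomial (Fin N) ℂ} (hq : q.IsHomogeneous e) :
    ∑ i : Fin N, X i * pderiv i q = e • q := by
  classical
  have key : ∀ v ∈ q.support,
      ∑ i : Fin N, X i * pderiv i (monomial v (coeff v q)) = e • monomial v (coeff v q) := by
    intro v hv
    have hdeg : v.degree = e := by
      rw [DFunLike.congr_fun Finsupp.degree_eq_weight_one v]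
      exact hq (mem_support_iff.1 hv)
    have hterm : ∀ i : Fin N, X i * pderiv i (monomial v (coeff v q))
        = (v i) • monomial v (coeff v q) := by
      intro i
      rw [pderiv_monomial]
      by_cases h : v i = 0
      · simp [h]
      · rw [X_mul_monomial', sub_single_add h, smul_monomial]
        congr 1
        rw [nsmul_eq_mul, mul_comm]
    rw [Finset.sum_congr rfl (fun i _ => hterm i), ← Finset.sum_smul]
    congr 1
    rw [← hdeg]
    exact (Finset.sum_subset (Finset.subset_univ v.support)
      (fun x _ hx => Finsupp.notMem_support_iff.1 hx)).symm
  calc ∑ i : Fin N, X i * pderiv i q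
      = ∑ i : Fin N, ∑ v ∈ q.support, X i * pderiv i (monomial v (coeff v q)) := by
        refine Finset.sum_congr rfl fun i _ => ?_
        conv_lhs => rw [as_sum q]
        rw [map_sum, Finset.mul_sum]
    _ = ∑ v ∈ q.support, ∑ i : Fin N, X i * pderiv i (monomial v (coeff v q)) :=
        Finset.sum_comm
    _ = ∑ v ∈ q.support, e • monomial v (coeff v q) := Finset.sum_congr rfl key
    _ = e • q := by rw [← Finset.smul_sum, ← as_sum q]

lemma pderiv_isHomogeneous {e : ℕ} {q : MvPolynomial (Fin N) ℂ} (hq : q.IsHomogeneous e)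
    (i : Fin N) : (pderiv i q).IsHomogeneous (e - 1) := by
  classical
  have hrepr : pderiv i q = ∑ v ∈ q.support, pderiv i (monomial v (coeff v q)) := by
    conv_lhs => rw [as_sum q]
    rw [map_sum]
  rw [← mem_homogeneousSubmodule, hrepr]
  refine Submodule.sum_mem _ fun v hv => ?_
  rw [pderiv_monomial, mem_homogeneousSubmodule]
  by_cases h : v i = 0
  · simp [h, isHomogeneous_zero]
  · refine isHomogeneous_monomial _ ?_
    have hdeg : v.degree = e := by
      rw [DFunLike.congr_fun Finsupp.degree_eq_weight_one v]
      exact hq (mem_support_iff.1 hv)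
    have h2 := finsupp_degree_add (v - Finsupp.single i 1) (Finsupp.single i 1)
    rw [sub_single_add h, finsupp_degree_single, hdeg] at h2
    omega

end GrModAux

end PolyLemmas
section ActionLemmas

open MvPolynomial

namespace GrModAux

variable {n : ℕ}

lemma X_mem_grading (i : Fin (n+1)) : (X i : PolyRing n) ∈ polyGrading n 1 := by
  rw [mem_homogeneousSubmodule]
  exact isHomogeneous_X ℂ i

lemma mem_span_X_of_constantCoeff {q : PolyRing n} (hq : constantCoeff q = 0) :
    q ∈ Ideal.span (Set.range (X : Fin (n+1) → PolyRing n)) := by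
  classical
  nth_rewrite 1 [as_sum q]
  refine Submodule.sum_mem _ fun v hv => ?_
  have hv0 : v ≠ 0 := by
    rintro rfl
    rw [constantCoeff_eq] at hq
    exact mem_support_iff.1 hv hq
  obtain ⟨i, hi⟩ : ∃ i, v i ≠ 0 := by
    by_contra h
    push_neg at h
    exact hv0 (Finsupp.ext h)
  have : monomial v (coeff v q) = X i * monomial (v - Finsupp.single i 1) (coeff v q) := by
    rw [X_mul_monomial', sub_single_add hi]
  rw [this, mul_comm]
  exact Ideal.mul_mem_left _ _ (Ideal.subset_span ⟨i, rfl⟩)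

variable {M : GrMod (polyGrading n)}

lemma csmul_comm (a : ℂ) (s : PolyRing n) (x : M.M) : s • (a • x) = a • (s • x) := by
  rw [← algebraMap_smul (PolyRing n) a x, ← algebraMap_smul (PolyRing n) a (s • x),
    smul_smul, smul_smul, mul_comm]

lemma zsmul_comm' (s : PolyRing n) (z : ℤ) (x : M.M) : s • (z • x) = z • (s • x) :=
  map_zsmul (LinearMap.lsmul (PolyRing n) M.M s) z x

lemma csmul_zsmul_comm (a : ℂ) (z : ℤ) (x : M.M) : a • (z • x) = z • (a • x) :=
  map_zsmul (DistribMulAction.toAddMonoidHom M.M a) z x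

/-- If all variables annihilate `x`, then every polynomial acts by its constant term. -/
lemma smul_of_ann {x : M.M} (hx : ∀ i, (X i : PolyRing n) • x = 0) (s : PolyRing n) :
    s • x = constantCoeff s • x := by
  have hu : (s - C (constantCoeff s)) ∈
      Ideal.span (Set.range (X : Fin (n+1) → PolyRing n)) := by
    apply mem_span_X_of_constantCoeff
    rw [map_sub, constantCoeff_C, sub_self]
  have hzero : ∀ u ∈ Ideal.span (Set.range (X : Fin (n+1) → PolyRing n)), u • x = 0 := by
    intro u hu
    induction hu using Submodule.span_induction with
    | mem u hmem => obtain ⟨i, rfl⟩ := hmem; exact hx i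
    | zero => rw [zero_smul]
    | add u v _ _ hu hv => rw [add_smul, hu, hv, add_zero]
    | smul t u _ hu => rw [smul_eq_mul, mul_smul, hu, smul_zero]
  have h1 : s • x = (C (constantCoeff s) : PolyRing n) • x + (s - C (constantCoeff s)) • x := by
    rw [← add_smul]
    ring_nf
  rw [h1, hzero _ hu, add_zero, ← MvPolynomial.algebraMap_eq, algebraMap_smul]

/-- In a semisimple module concentrated in one degree, polynomials act via constant term. -/
lemma smul_of_semisimple {C' : GrMod (polyGrading n)} {m : ℤ}
    (hC : IsSemisimpleInDegree C' m) (s : PolyRing n) (c : C'.M) :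
    s • c = constantCoeff s • c := by
  classical
  have hdecomp : s = ∑ i ∈ Finset.range (s.totalDegree + 1), homogeneousComponent i s :=
    (sum_homogeneousComponent s).symm
  have h1 : s • c = ∑ i ∈ Finset.range (s.totalDegree + 1), (homogeneousComponent i s : PolyRing n) • c := by
    conv_lhs => rw [hdecomp]
    rw [Finset.sum_smul]
  rw [h1, Finset.sum_eq_single 0 ?_ ?_]
  · rw [homogeneousComponent_zero, ← constantCoeff_eq, ← MvPolynomial.algebraMap_eq,
      algebraMap_smul]
  · intro i _ hi
    refine hC.2 i (Nat.one_le_iff_ne_zero.2 hi) _ ?_ c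
    rw [mem_homogeneousSubmodule]
    exact homogeneousComponent_isHomogeneous i s
  · intro h
    exact absurd (Finset.mem_range.2 (Nat.succ_pos _)) h

/-- Elements of a module concentrated in degree `m` all lie in `gr m`. -/
lemma mem_gr_of_concentrated {C' : GrMod (polyGrading n)} {m : ℤ}
    (hC : ∀ k, k ≠ m → C'.gr k = ⊥) (c : C'.M) : c ∈ C'.gr m := by
  obtain ⟨s, w, hw, hsum⟩ := exists_decomp C' c
  rw [hsum]
  refine Submodule.sum_mem _ fun e he => ?_
  by_cases hem : e = m
  · rw [← hem]; exact hw e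
  · have := hC e hem ▸ hw e
    rw [Submodule.mem_bot] at this
    rw [this]
    exact (C'.gr m).zero_mem

end GrModAux

end ActionLemmas
section Cochains

open MvPolynomial

namespace GrModAux

variable {n : ℕ}

/-- The Koszul-type differential on finset-indexed cochains. -/
noncomputable def Dop (M : GrMod (polyGrading n)) (c : Finset (Fin (n+1)) → M.M)
    (T : Finset (Fin (n+1))) : M.M :=
  ∑ i ∈ T, sgn i T • ((X i : PolyRing n) • c (T.erase i))

variable {M : GrMod (polyGrading n)}

lemma Dop_sub (c₁ c₂ : Finset (Fin (n+1)) → M.M) (T : Finset (Fin (n+1))) :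
    Dop M (fun T => c₁ T - c₂ T) T = Dop M c₁ T - Dop M c₂ T := by
  unfold Dop
  rw [← Finset.sum_sub_distrib]
  exact Finset.sum_congr rfl fun i _ => by rw [smul_sub, smul_sub]

lemma Dop_csmul (a : ℂ) (c : Finset (Fin (n+1)) → M.M) (T : Finset (Fin (n+1))) :
    Dop M (fun T => a • c T) T = a • Dop M c T := by
  unfold Dop
  rw [Finset.smul_sum]
  exact Finset.sum_congr rfl fun i _ => by
    rw [csmul_comm, csmul_zsmul_comm]

lemma Dop_hom {M N' : GrMod (polyGrading n)} (φ : GrHom M N') (c : Finset (Fin (n+1)) → M.M)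
    (T : Finset (Fin (n+1))) :
    φ.toFun (Dop M c T) = Dop N' (fun T => φ.toFun (c T)) T := by
  unfold Dop
  rw [map_sum]
  exact Finset.sum_congr rfl fun i _ => by rw [map_zsmul, map_smul]

lemma Dop_mem {c : Finset (Fin (n+1)) → M.M} {T : Finset (Fin (n+1))} {d : ℤ}
    (h : ∀ i ∈ T, c (T.erase i) ∈ M.gr d) : Dop M c T ∈ M.gr (d + 1) := by
  refine Submodule.sum_mem _ fun i hi => ?_
  refine zsmul_mem ?_ _
  have := M.smul_mem' 1 d (X i) (X_mem_grading i) _ (h i hi)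
  simpa using this

lemma half_add_self {V : Type} [AddCommGroup V] [Module ℂ V] {v : V} (h : v + v = 0) :
    v = 0 := by
  have h2 : (2 : ℂ) • v = 0 := by rw [two_smul]; exact h
  have := congrArg (fun w => ((2 : ℂ)⁻¹) • w) h2
  simpa [smul_smul] using this

lemma Dop_Dop (c : Finset (Fin (n+1)) → M.M) (T : Finset (Fin (n+1))) :
    Dop M (Dop M c) T = 0 := by
  classical
  set g : Fin (n+1) → Fin (n+1) → M.M := fun i j =>
    (sgn i T * sgn j (T.erase i)) •
      ((X i : PolyRing n) • ((X j : PolyRing n) • c ((T.erase i).erase j))) with hg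
  have step1 : Dop M (Dop M c) T = ∑ i ∈ T, ∑ j ∈ T.erase i, g i j := by
    unfold Dop
    refine Finset.sum_congr rfl fun i _ => ?_
    rw [Finset.smul_sum, Finset.smul_sum]
    refine Finset.sum_congr rfl fun j _ => ?_
    rw [hg]
    simp only
    rw [zsmul_comm', smul_smul (sgn i T) (sgn j (T.erase i))]
  set G : Fin (n+1) → Fin (n+1) → M.M := fun i j => if j = i then 0 else g i j with hG
  have hanti : ∀ i ∈ T, ∀ j ∈ T, G j i = - G i j := by
    intro i hi j hj
    by_cases hij : i = j
    · subst hij; simp [hG]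
    · simp only [hG, if_neg hij, if_neg (Ne.symm hij)]
      have hc : sgn j T * sgn i (T.erase j) = -(sgn i T * sgn j (T.erase i)) :=
        sgn_key' hj hi (Ne.symm hij)
      rw [hg]
      simp only
      rw [hc, neg_smul]
      congr 1
      rw [Finset.erase_right_comm, smul_smul, smul_smul, mul_comm (X j : PolyRing n)]
  have step2 : ∑ i ∈ T, ∑ j ∈ T.erase i, g i j = ∑ i ∈ T, ∑ j ∈ T, G i j := by
    refine Finset.sum_congr rfl fun i _ => ?_
    have h1 : ∑ j ∈ T, G i j = ∑ j ∈ T.erase i, G i j :=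
      (Finset.sum_erase _ (by simp [hG])).symm
    rw [h1]
    exact Finset.sum_congr rfl fun j hj => by
      rw [hG]; simp only [if_neg (Finset.ne_of_mem_erase hj)]
  have key : (∑ i ∈ T, ∑ j ∈ T, G i j) + (∑ i ∈ T, ∑ j ∈ T, G i j) = 0 := by
    nth_rewrite 2 [Finset.sum_comm]
    rw [← Finset.sum_add_distrib]
    refine Finset.sum_eq_zero fun i hi => ?_
    rw [← Finset.sum_add_distrib]
    refine Finset.sum_eq_zero fun j hj => ?_
    rw [hanti i hi j hj]; simp
  rw [step1, step2]
  exact half_add_self key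

end GrModAux

end Cochains
section FreeModule

open MvPolynomial

namespace GrModAux

variable {n : ℕ} {P : GrMod (polyGrading n)} {ι : Type}

/-- Coordinatewise partial derivative on a free graded module. -/
noncomputable def der (b : Module.Basis ι (PolyRing n) P.M) (i : Fin (n+1)) : P.M →ₗ[ℂ] P.M :=
  (((b.repr.restrictScalars ℂ).symm.toLinearMap).comp
    (Finsupp.mapRange.linearMap
      ((pderiv i : Derivation ℂ (PolyRing n) (PolyRing n)) : PolyRing n →ₗ[ℂ] PolyRing n))).comp
    (b.repr.restrictScalars ℂ).toLinearMap

lemma repr_der (b : Module.Basis ι (PolyRing n) P.M) (i : Fin (n+1)) (x : P.M) (a : ι) :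
    b.repr (der b i x) a = pderiv i (b.repr x a) := by
  simp [der]

lemma der_X_smul (b : Module.Basis ι (PolyRing n) P.M) (i j : Fin (n+1)) (x : P.M) :
    der b i ((X j : PolyRing n) • x) = (if j = i then x else 0) + (X j : PolyRing n) • der b i x := by
  classical
  apply b.repr.injective
  ext a
  rw [repr_der, map_smul, map_add, map_smul]
  simp only [Finsupp.smul_apply, Finsupp.add_apply, smul_eq_mul]
  rw [pderiv_mul, pderiv_X]
  by_cases h : j = i
  · subst h
    simp [Pi.single_apply, repr_der]
  · have h' : i ≠ j := Ne.symm h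
    simp [Pi.single_apply, h, Ne.symm h, repr_der]

/-- Euler's identity in operator form. -/
lemma der_euler (b : Module.Basis ι (PolyRing n) P.M) {e : ℕ} {x : P.M}
    (hx : ∀ a : ι, (b.repr x a).IsHomogeneous e) :
    ∑ i : Fin (n+1), (X i : PolyRing n) • der b i x = e • x := by
  apply b.repr.injective
  rw [map_sum, map_nsmul]
  ext a
  rw [Finsupp.finset_sum_apply]
  have h1 : ∀ i : Fin (n+1), (b.repr ((X i : PolyRing n) • der b i x)) a
      = X i * pderiv i (b.repr x a) := by
    intro i
    rw [map_smul]
    simp only [Finsupp.smul_apply, smul_eq_mul]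
    rw [repr_der]
  rw [Finset.sum_congr rfl (fun i _ => h1 i), euler (hx a)]
  simp

lemma mem_of_coords {cdeg : ℤ} (b : Module.Basis ι (PolyRing n) P.M) (hb : ∀ j, b j ∈ P.gr cdeg)
    {e : ℕ} {x : P.M} (hx : ∀ a, (b.repr x a).IsHomogeneous e) : x ∈ P.gr (cdeg + e) := by
  have hrepr : (b.repr x).sum (fun a q => q • b a) = x := by
    have h0 := b.linearCombination_repr x
    rwa [Finsupp.linearCombination_apply] at h0
  rw [← hrepr]
  apply Submodule.finsuppSum_mem
  intro a _
  exact P.smul_mem' e cdeg (b.repr x a) (hx a) (b a) (hb a)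

lemma coords_of_mem {cdeg : ℤ} (b : Module.Basis ι (PolyRing n) P.M) (hb : ∀ j, b j ∈ P.gr cdeg)
    {e : ℕ} {x : P.M} (hx : x ∈ P.gr (cdeg + e)) (a : ι) :
    (b.repr x a).IsHomogeneous e := by
  classical
  set F := b.repr x with hF
  set D := F.support.sup (fun a => (F a).totalDegree) with hD
  set y : ℕ → P.M := fun d =>
    b.repr.symm (Finsupp.mapRange (homogeneousComponent d) (map_zero _) F) with hy
  have hyrepr : ∀ d a', b.repr (y d) a' = homogeneousComponent d (F a') := by
    intro d a'
    rw [hy]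
    simp
  have hymem : ∀ d : ℕ, y d ∈ P.gr (cdeg + (d : ℤ)) := by
    intro d
    refine mem_of_coords b hb fun a' => ?_
    rw [hyrepr]
    exact homogeneousComponent_isHomogeneous d (F a')
  have hsum : ∑ d ∈ Finset.range (D + 1), y d = x := by
    apply b.repr.injective
    rw [map_sum]
    refine Finsupp.ext fun a' => ?_
    rw [Finsupp.finset_sum_apply]
    have : ∀ d ∈ Finset.range (D+1), (b.repr (y d)) a' = homogeneousComponent d (F a') :=
      fun d _ => hyrepr d a'
    rw [Finset.sum_congr rfl this]
    by_cases ha' : a' ∈ F.support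
    · have h0 : (F a').totalDegree ≤ D := by
        simpa using Finset.le_sup (f := fun a => (F a).totalDegree) ha'
      have hle : (F a').totalDegree + 1 ≤ D + 1 := by omega
      rw [← Finset.sum_subset (Finset.range_subset_range.2 hle)
        (fun d _ hd => homogeneousComponent_eq_zero d (F a') (by
          simp only [Finset.mem_range, not_lt] at hd
          omega))]
      exact sum_homogeneousComponent (F a')
    · have : F a' = 0 := Finsupp.notMem_support_iff.1 ha'
      rw [this]
      simp
  -- now identify x with its component of degree `cdeg + e`
  set w : ℤ → P.M := fun t => if h : cdeg ≤ t then y (t - cdeg).toNat else 0 with hw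
  have hwmem : ∀ t, w t ∈ P.gr t := by
    intro t
    rw [hw]
    by_cases h : cdeg ≤ t
    · simp only [dif_pos h]
      have h2 : cdeg + ((t - cdeg).toNat : ℤ) = t := by omega
      have h3 := hymem (t - cdeg).toNat
      rwa [h2] at h3
    · simp only [dif_neg h]
      exact (P.gr t).zero_mem
  set s : Finset ℤ := (Finset.range (D+1)).image (fun d : ℕ => cdeg + (d : ℤ)) with hs
  have hsumw : ∑ t ∈ s, w t = x := by
    rw [hs, Finset.sum_image (by intro p _ q _ h; have h' : cdeg + (p:ℤ) = cdeg + (q:ℤ) := h; omega)]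
    rw [← hsum]
    refine Finset.sum_congr rfl fun d _ => ?_
    rw [hw]
    simp only [dif_pos (by omega : cdeg ≤ cdeg + (d:ℤ))]
    congr 1
    omega
  have hpiece := sum_piece hwmem hx hsumw
  by_cases hin : cdeg + (e:ℤ) ∈ s
  · rw [if_pos hin] at hpiece
    have : x = y e := by
      rw [hpiece, hw]
      simp only [dif_pos (by omega : cdeg ≤ cdeg + (e:ℤ))]
      congr 1
      omega
    rw [hF, this, hyrepr]
    exact homogeneousComponent_isHomogeneous e (F a)
  · rw [if_neg hin] at hpiece
    rw [hF, hpiece]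
    simp only [map_zero, Finsupp.coe_zero, Pi.zero_apply]
    exact isHomogeneous_zero _ _ _

end GrModAux

end FreeModule
section FreeAcyclic

open MvPolynomial

namespace GrModAux

variable {n : ℕ} {P : GrMod (polyGrading n)} {ι : Type}

lemma free_acyclic {cdeg : ℤ} (b : Module.Basis ι (PolyRing n) P.M) (hb : ∀ j, b j ∈ P.gr cdeg)
    (k e : ℕ) (hk : 1 ≤ k) (he : 1 ≤ e) (hkn : k ≤ n + 1)
    (c : Finset (Fin (n+1)) → P.M)
    (hc : ∀ T, T.card = k → c T ∈ P.gr (cdeg + e))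
    (hz : ∀ T, T.card = k + 1 → Dop P c T = 0) :
    ∃ v : Finset (Fin (n+1)) → P.M,
      (∀ T, T.card + 1 = k → v T ∈ P.gr (cdeg + e - 1)) ∧
      (∀ T, T.card = k → c T = Dop P v T) := by
  classical
  set N : ℕ := e + (n + 1) - k with hN
  have hN1 : 1 ≤ N := by omega
  set Hc : Finset (Fin (n+1)) → P.M := fun T =>
    ∑ i ∈ Tᶜ, sgn i (insert i T) • der b i (c (insert i T)) with hHc
  have hmemH : ∀ T : Finset (Fin (n+1)), T.card + 1 = k → Hc T ∈ P.gr (cdeg + e - 1) := by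
    intro T hT
    rw [hHc]
    refine Submodule.sum_mem _ fun i hi => ?_
    refine zsmul_mem ?_ _
    have hins : (insert i T).card = k := by
      rw [Finset.card_insert_of_notMem (Finset.mem_compl.1 hi)]
      omega
    have hcoords := coords_of_mem b hb (hc _ hins)
    have hh : ∀ a, (b.repr (der b i (c (insert i T))) a).IsHomogeneous (e - 1) := by
      intro a
      rw [repr_der]
      exact pderiv_isHomogeneous (hcoords a) i
    have hmem := mem_of_coords b hb hh
    have hcast : cdeg + ((e - 1 : ℕ) : ℤ) = cdeg + e - 1 := by omega
    rwa [hcast] at hmem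
  have main : ∀ T : Finset (Fin (n+1)), T.card = k → Dop P Hc T = N • c T := by
    intro T hT
    have hTcompl : Tᶜ.card = n + 1 - k := by
      rw [Finset.card_compl, hT]
      simp
    have hcoordsT := coords_of_mem b hb (hc T hT)
    set A : Fin (n+1) → Fin (n+1) → P.M := fun i j =>
      (sgn i T * sgn j (insert j (T.erase i))) •
        ((X i : PolyRing n) • der b j (c (insert j (T.erase i)))) with hA
    set B : Fin (n+1) → Fin (n+1) → P.M := fun j i =>
      (sgn j (insert j T) * sgn i (insert j T)) •
        ((X i : PolyRing n) • der b j (c ((insert j T).erase i))) with hB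
    have step1 : Dop P Hc T
        = (∑ i ∈ T, (X i : PolyRing n) • der b i (c T)) + ∑ i ∈ T, ∑ j ∈ Tᶜ, A i j := by
      unfold Dop
      rw [← Finset.sum_add_distrib]
      refine Finset.sum_congr rfl fun i hi => ?_
      have hHT : Hc (T.erase i) = sgn i T • der b i (c T)
          + ∑ j ∈ Tᶜ, sgn j (insert j (T.erase i)) • der b j (c (insert j (T.erase i))) := by
        rw [hHc]
        simp only
        rw [Finset.compl_erase, Finset.sum_insert (by simp [hi] : i ∉ Tᶜ),
          Finset.insert_erase hi]
      rw [hHT, smul_add, smul_add]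
      congr 1
      · rw [zsmul_comm', smul_smul, sgn_mul_self, one_smul]
      · rw [Finset.smul_sum, Finset.smul_sum]
        refine Finset.sum_congr rfl fun j hj => ?_
        rw [hA]
        simp only
        rw [zsmul_comm', smul_smul]
    have step2 : ∀ j ∈ Tᶜ, sgn j (insert j T) • der b j (Dop P c (insert j T))
        = (c T + (X j : PolyRing n) • der b j (c T)) + ∑ i ∈ T, B j i := by
      intro j hj
      have hjT : j ∉ T := Finset.mem_compl.1 hj
      have hDexp : Dop P c (insert j T)
          = sgn j (insert j T) • ((X j : PolyRing n) • c T)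
          + ∑ i ∈ T, sgn i (insert j T) • ((X i : PolyRing n) • c ((insert j T).erase i)) := by
        unfold Dop
        rw [Finset.sum_insert hjT, Finset.erase_insert hjT]
      rw [hDexp, map_add, map_zsmul, map_sum, smul_add]
      congr 1
      · rw [smul_smul, sgn_mul_self, one_smul, der_X_smul]
        simp
      · rw [Finset.smul_sum]
        refine Finset.sum_congr rfl fun i hi => ?_
        rw [hB]
        simp only
        have hij : i ≠ j := fun h => hjT (h ▸ hi)
        rw [map_zsmul, der_X_smul, if_neg hij, zero_add, smul_smul]
    have hcancel : (∑ i ∈ T, ∑ j ∈ Tᶜ, A i j) + (∑ j ∈ Tᶜ, ∑ i ∈ T, B j i) = 0 := by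
      rw [Finset.sum_comm (s := Tᶜ)]
      rw [← Finset.sum_add_distrib]
      refine Finset.sum_eq_zero fun i hi => ?_
      rw [← Finset.sum_add_distrib]
      refine Finset.sum_eq_zero fun j hj => ?_
      have hjT : j ∉ T := Finset.mem_compl.1 hj
      have hij : j ≠ i := fun h => hjT (h ▸ hi)
      have h2 : insert j (T.erase i) = (insert j T).erase i :=
        (Finset.erase_insert_of_ne hij).symm
      have hcoeff : sgn i T * sgn j ((insert j T).erase i)
          = -(sgn j (insert j T) * sgn i (insert j T)) := by
        have h1 : T = (insert j T).erase j := (Finset.erase_insert hjT).symm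
        nth_rewrite 1 [h1]
        rw [sgn_key (Finset.mem_insert_of_mem hi) (Finset.mem_insert_self j T)
          (fun h => hij h.symm)]
        rw [mul_comm]
      rw [hA, hB]
      simp only
      rw [h2, hcoeff, neg_smul]
      exact neg_add_cancel _
    have hsplit : ∑ j ∈ Tᶜ, (c T + (X j : PolyRing n) • der b j (c T))
        = Tᶜ.card • c T + ∑ j ∈ Tᶜ, (X j : PolyRing n) • der b j (c T) := by
      rw [Finset.sum_add_distrib, Finset.sum_const]
    have heuler : (∑ i ∈ T, (X i : PolyRing n) • der b i (c T))
        + (∑ j ∈ Tᶜ, (X j : PolyRing n) • der b j (c T)) = e • c T := by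
      rw [Finset.sum_add_sum_compl]
      exact der_euler b hcoordsT
    have hzero2 : ∑ j ∈ Tᶜ, sgn j (insert j T) • der b j (Dop P c (insert j T)) = 0 := by
      refine Finset.sum_eq_zero fun j hj => ?_
      have hins : (insert j T).card = k + 1 := by
        rw [Finset.card_insert_of_notMem (Finset.mem_compl.1 hj)]
        omega
      rw [hz _ hins, map_zero, smul_zero]
    have key2 : Dop P Hc T + ∑ j ∈ Tᶜ, sgn j (insert j T) • der b j (Dop P c (insert j T))
        = ((∑ i ∈ T, (X i : PolyRing n) • der b i (c T))
            + (∑ j ∈ Tᶜ, (X j : PolyRing n) • der b j (c T)))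
          + Tᶜ.card • c T
          + ((∑ i ∈ T, ∑ j ∈ Tᶜ, A i j) + (∑ j ∈ Tᶜ, ∑ i ∈ T, B j i)) := by
      rw [step1, Finset.sum_congr rfl step2, Finset.sum_add_distrib, hsplit]
      abel
    have final : Dop P Hc T = e • c T + Tᶜ.card • c T := by
      have := key2
      rw [hzero2, add_zero, hcancel, add_zero, heuler] at this
      exact this
    rw [final, ← add_nsmul, hTcompl]
    congr 1
    omega
  refine ⟨fun T => ((N : ℂ))⁻¹ • Hc T, ?_, ?_⟩
  · intro T hT
    exact Submodule.smul_mem _ _ (hmemH T hT)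
  · intro T hT
    rw [Dop_csmul, main T hT, ← Nat.cast_smul_eq_nsmul ℂ, smul_smul,
      inv_mul_cancel₀ (by exact_mod_cast (by omega : N ≠ 0)), one_smul]

end GrModAux

end FreeAcyclic
section Descend

open MvPolynomial

namespace GrModAux

variable {n : ℕ}

lemma Dop_congr {M : GrMod (polyGrading n)} {c₁ c₂ : Finset (Fin (n+1)) → M.M}
    {T : Finset (Fin (n+1))} (h : ∀ i ∈ T, c₁ (T.erase i) = c₂ (T.erase i)) :
    Dop M c₁ T = Dop M c₂ T := by
  unfold Dop
  exact Finset.sum_congr rfl fun i hi => by rw [h i hi]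

lemma mem_gr_cast {M : GrMod (polyGrading n)} {x : M.M} {d d' : ℤ} (h : d = d')
    (hx : x ∈ M.gr d) : x ∈ M.gr d' := h ▸ hx

lemma descend (P : ℕ → GrMod (polyGrading n)) (d : ∀ k, GrHom (P (k+1)) (P k))
    (hfree : ∀ k, IsFreeGenInDegree (P k) (k : ℤ))
    (hex : ∀ k, LinearMap.range (d (k+1)).toFun = LinearMap.ker (d k).toFun)
    (m : ℤ) (hm : 0 ≤ m) :
    ∀ j : ℕ, ∀ c : Finset (Fin (n+1)) → (P j).M,
      (∀ T, T.card = j+2 → c T ∈ (P j).gr (m + j + 2) ∧ c T ∈ LinearMap.range (d j).toFun) →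
      (∀ T, T.card = j+3 → Dop (P j) c T = 0) →
      ∃ v : Finset (Fin (n+1)) → (P j).M,
        (∀ T, T.card = j+1 → v T ∈ (P j).gr (m + j + 1) ∧ v T ∈ LinearMap.range (d j).toFun) ∧
        (∀ T, T.card = j+2 → c T = Dop (P j) v T) := by
  classical
  set Q : ℕ → Prop := fun j =>
    ∀ c : Finset (Fin (n+1)) → (P j).M,
      (∀ T, T.card = j+2 → c T ∈ (P j).gr (m + j + 2) ∧ c T ∈ LinearMap.range (d j).toFun) →
      (∀ T, T.card = j+3 → Dop (P j) c T = 0) →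
      ∃ v : Finset (Fin (n+1)) → (P j).M,
        (∀ T, T.card = j+1 → v T ∈ (P j).gr (m + j + 1) ∧ v T ∈ LinearMap.range (d j).toFun) ∧
        (∀ T, T.card = j+2 → c T = Dop (P j) v T) with hQ
  have triv : ∀ j, n ≤ j → Q j := by
    intro j hj c hmem hcoc
    refine ⟨0, fun T hT => ⟨(Submodule.zero_mem _), ⟨0, map_zero _⟩⟩, fun T hT => ?_⟩
    exfalso
    have h1 : T.card ≤ n + 1 := by
      have := Finset.card_le_univ T
      simpa using this
    omega
  have step : ∀ j, j + 2 ≤ n + 1 → Q (j+1) → Q j := by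
    intro j hj ih c hmem hcoc
    -- lift `c` through `d j`
    have hlift : ∀ T : Finset (Fin (n+1)), ∃ x : (P (j+1)).M,
        T.card = j+2 → x ∈ (P (j+1)).gr (m + j + 2) ∧ (d j).toFun x = c T := by
      intro T
      by_cases hT : T.card = j+2
      · obtain ⟨x, hx1, hx2⟩ := mem_range_piece (d j) (hmem T hT).1 (hmem T hT).2
        exact ⟨x, fun _ => ⟨hx1, hx2⟩⟩
      · exact ⟨0, fun h => absurd h hT⟩
    choose y hy using hlift
    -- its differential is a cocycle valued in the next syzygy
    have hc'mem : ∀ T, T.card = j+3 →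
        Dop (P (j+1)) y T ∈ (P (j+1)).gr (m + (j+1) + 2)
          ∧ Dop (P (j+1)) y T ∈ LinearMap.range (d (j+1)).toFun := by
      intro T hT
      constructor
      · refine mem_gr_cast (by push_cast; ring) (Dop_mem (d := m + j + 2) fun i hi => ?_)
        exact (hy (T.erase i) (by rw [Finset.card_erase_of_mem hi, hT]; omega)).1
      · rw [hex j, LinearMap.mem_ker, Dop_hom]
        have : Dop (P j) (fun T' => (d j).toFun (y T')) T = Dop (P j) c T :=
          Dop_congr fun i hi =>
            (hy (T.erase i) (by rw [Finset.card_erase_of_mem hi, hT]; omega)).2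
        rw [this, hcoc T hT]
    have hc'coc : ∀ T, T.card = j+4 → Dop (P (j+1)) (Dop (P (j+1)) y) T = 0 :=
      fun T _ => Dop_Dop _ _
    obtain ⟨u, hu1, hu2⟩ := ih (Dop (P (j+1)) y)
      (fun T hT => hc'mem T (by omega)) (fun T hT => hc'coc T (by omega))
    -- correct the lift to a cocycle
    set w : Finset (Fin (n+1)) → (P (j+1)).M := fun T => y T - u T with hw
    have hwmem : ∀ T, T.card = j+2 → w T ∈ (P (j+1)).gr (m + j + 2) := by
      intro T hT
      refine sub_mem ((hy T hT).1) ?_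
      exact mem_gr_cast (by push_cast; ring) (hu1 T (by omega)).1
    have hwcoc : ∀ T, T.card = j+3 → Dop (P (j+1)) w T = 0 := by
      intro T hT
      rw [hw]
      rw [Dop_sub]
      rw [← hu2 T (by omega), sub_self]
    obtain ⟨ιP, bP, hbP⟩ := hfree (j+1)
    have hdeg : ((j+1 : ℕ) : ℤ) + ((m.toNat + 1 : ℕ) : ℤ) = m + j + 2 := by
      push_cast; omega
    obtain ⟨z, hz1, hz2⟩ := free_acyclic bP hbP (j+2) (m.toNat + 1)
      (by omega) (by omega) (by omega) w
      (fun T hT => mem_gr_cast hdeg.symm (hwmem T hT))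
      (fun T hT => hwcoc T (by omega))
    refine ⟨fun T => (d j).toFun (z T), fun T hT => ⟨?_, ⟨z T, rfl⟩⟩, fun T hT => ?_⟩
    · have := (d j).map_gr _ _ (hz1 T (by omega))
      exact mem_gr_cast (by push_cast; omega) this
    · have h1 : c T = (d j).toFun (w T) := by
        rw [hw]
        simp only
        rw [map_sub]
        have hker : (d j).toFun (u T) = 0 := by
          have := (hu1 T (by omega)).2
          rw [hex j] at this
          exact this
        rw [hker, sub_zero, (hy T hT).2]
      rw [h1, hz2 T hT, Dop_hom]
  have down : ∀ t j, n ≤ j + t → Q j := by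
    intro t
    induction t with
    | zero => exact fun j hj => triv j (by omega)
    | succ t ih =>
      intro j hj
      by_cases hjn : n ≤ j
      · exact triv j hjn
      · exact step j (by omega) (ih (j+1) (by omega))
  exact fun j => down n j (by omega)

end GrModAux

end Descend
section Crux

open MvPolynomial

namespace GrModAux

variable {n : ℕ}

lemma sgn_singleton (i : Fin (n+1)) : sgn i {i} = 1 := by
  have h : ({i} : Finset (Fin (n+1))).filter (fun x => x < i) = ∅ := by
    rw [Finset.filter_singleton, if_neg (lt_irrefl i)]
  simp [sgn, h]

lemma sgn_pair_left {i j : Fin (n+1)} (h : i < j) : sgn i {i,j} = 1 := by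
  have h1 : ({i,j} : Finset (Fin (n+1))).filter (fun x => x < i) = ∅ := by
    rw [Finset.filter_insert, if_neg (lt_irrefl i), Finset.filter_singleton,
      if_neg (not_lt.2 h.le)]
  simp [sgn, h1]

lemma sgn_pair_right {i j : Fin (n+1)} (h : i < j) : sgn j {i,j} = -1 := by
  have h1 : ({i,j} : Finset (Fin (n+1))).filter (fun x => x < j) = {i} := by
    rw [Finset.filter_insert, if_pos h, Finset.filter_singleton, if_neg (lt_irrefl j)]
    simp
  simp [sgn, h1]

lemma crux (A : GrMod (polyGrading n)) (hA : IsLinearModule A) (m : ℤ) (hm : 0 ≤ m)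
    (a : Fin (n+1) → A.M) (ha : ∀ i, a i ∈ A.gr (m+1))
    (hsym : ∀ i j, (X i : PolyRing n) • a j = (X j : PolyRing n) • a i) :
    ∃ a₀ ∈ A.gr m, ∀ i, (X i : PolyRing n) • a₀ = a i := by
  classical
  obtain ⟨P, d, p, hfree, hpsurj, hex0, hex⟩ := hA
  have hchoose : ∀ i : Fin (n+1), ∃ x ∈ (P 0).gr (m+1), p.toFun x = a i :=
    fun i => surj_piece p hpsurj (ha i)
  choose y0 hy0mem hy0 using hchoose
  set y : Finset (Fin (n+1)) → (P 0).M := fun T => ∑ i ∈ T, y0 i with hy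
  have hymem : ∀ T, y T ∈ (P 0).gr (m+1) := fun T => Submodule.sum_mem _ fun i _ => hy0mem i
  have hpy : ∀ i : Fin (n+1), p.toFun (y {i}) = a i := by
    intro i
    rw [hy]
    simp only
    rw [Finset.sum_singleton, hy0]
  have hpDy : ∀ T, T.card = 2 → p.toFun (Dop (P 0) y T) = 0 := by
    intro T hT
    obtain ⟨i, j, hij, rfl⟩ := Finset.card_eq_two.1 hT
    have key : ∀ (i j : Fin (n+1)), i < j → p.toFun (Dop (P 0) y {i,j}) = 0 := by
      intro i j h
      have hij' : i ≠ j := ne_of_lt h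
      rw [Dop_hom]
      unfold Dop
      rw [Finset.sum_pair hij']
      have he1 : ({i,j} : Finset (Fin (n+1))).erase i = {j} :=
        Finset.erase_insert (by simp [hij'])
      have he2 : ({i,j} : Finset (Fin (n+1))).erase j = {i} := by
        rw [Finset.erase_insert_of_ne hij', Finset.erase_singleton]
        simp
      rw [he1, he2, sgn_pair_left h, sgn_pair_right h]
      simp only [one_smul, neg_smul]
      rw [hpy, hpy, hsym i j]
      simp
    rcases lt_or_gt_of_ne hij with h | h
    · exact key i j h
    · rw [Finset.pair_comm]
      exact key j i h
  have hmem0 : ∀ T, T.card = 0+2 → Dop (P 0) y T ∈ (P 0).gr (m + (0:ℕ) + 2)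
      ∧ Dop (P 0) y T ∈ LinearMap.range (d 0).toFun := by
    intro T hT
    constructor
    · exact mem_gr_cast (by push_cast; ring) (Dop_mem (d := m+1) fun i hi => hymem _)
    · rw [hex0]
      exact LinearMap.mem_ker.2 (hpDy T (by omega))
  have hcoc0 : ∀ T, T.card = 0+3 → Dop (P 0) (Dop (P 0) y) T = 0 := fun T _ => Dop_Dop _ _
  obtain ⟨u, hu1, hu2⟩ := descend P d hfree hex m hm 0 (Dop (P 0) y) hmem0 hcoc0
  set w : Finset (Fin (n+1)) → (P 0).M := fun T => y T - u T with hw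
  have hwmem : ∀ T : Finset (Fin (n+1)), T.card = 1 → w T ∈ (P 0).gr (m + 1) := by
    intro T hT
    exact sub_mem (hymem T) (mem_gr_cast (by push_cast; ring) (hu1 T (by omega)).1)
  have hwcoc : ∀ T, T.card = 2 → Dop (P 0) w T = 0 := by
    intro T hT
    rw [hw]
    rw [Dop_sub, ← hu2 T (by omega), sub_self]
  obtain ⟨ι0, b0, hb0⟩ := hfree 0
  have hdeg : ((0:ℕ) : ℤ) + ((m.toNat + 1 : ℕ) : ℤ) = m + 1 := by push_cast; omega
  obtain ⟨z, hz1, hz2⟩ := free_acyclic b0 hb0 1 (m.toNat+1) (by omega) (by omega) (by omega) w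
    (fun T hT => mem_gr_cast hdeg.symm (hwmem T hT)) (fun T hT => hwcoc T (by omega))
  refine ⟨p.toFun (z ∅), ?_, ?_⟩
  · have hgr := p.map_gr _ _ (hz1 ∅ (by simp))
    exact mem_gr_cast (by push_cast; omega) hgr
  · intro i
    have h1 : a i = p.toFun (w {i}) := by
      rw [hw]
      simp only
      rw [map_sub]
      have hker : p.toFun (u {i}) = 0 := by
        have hmem := (hu1 {i} (by simp)).2
        rw [hex0] at hmem
        exact hmem
      rw [hker, sub_zero, hpy]
    have h2 := hz2 {i} (by simp)
    rw [h1, h2, Dop_hom]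
    unfold Dop
    rw [Finset.sum_singleton, Finset.erase_singleton, sgn_singleton]
    simp

end GrModAux

end Crux
section Final

open MvPolynomial GrModAux

set_option maxHeartbeats 2000000

/-- Lemma 1.2: let `0 → A → B → C → 0` be a short exact sequence of finitely
generated graded modules over `S = ℂ[x₀,…,xₙ]` where `A` is a linear (Koszul)
module and `C` is semisimple concentrated in a single degree `m ≥ 0`.  Then the
sequence splits. -/
theorem stmt5 {n : ℕ} (A B C : GrMod (polyGrading n))
    [Module.Finite (PolyRing n) A.M] [Module.Finite (PolyRing n) B.M]
    [Module.Finite (PolyRing n) C.M]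
    (hA : IsLinearModule A) (m : ℤ) (hm : 0 ≤ m) (hC : IsSemisimpleInDegree C m)
    (f : GrHom A B) (g : GrHom B C) (hses : IsSES f g) :
    Splits f g := by
  classical
  have hCgr : ∀ c : C.M, c ∈ C.gr m := mem_gr_of_concentrated hC.1
  have hCconst : ∀ (s : PolyRing n) (c : C.M), s • c = constantCoeff s • c :=
    smul_of_semisimple hC
  have hgf : ∀ x : A.M, g.toFun (f.toFun x) = 0 := by
    intro x
    have hmem : f.toFun x ∈ LinearMap.ker g.toFun := by
      rw [← hses.exact]; exact ⟨x, rfl⟩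
    exact hmem
  -- Step 1: good lifts of elements of C
  have goodlift : ∀ c : C.M, ∃ b : B.M,
      b ∈ B.gr m ∧ g.toFun b = c ∧ ∀ i : Fin (n+1), (X i : PolyRing n) • b = 0 := by
    intro c
    obtain ⟨b₀, hb₀mem, hb₀⟩ := surj_piece g hses.surj (hCgr c)
    have hXb : ∀ i : Fin (n+1), (X i : PolyRing n) • b₀ ∈ LinearMap.range f.toFun := by
      intro i
      rw [hses.exact, LinearMap.mem_ker, map_smul, hb₀, hCconst]
      simp
    have hXbgr : ∀ i : Fin (n+1), (X i : PolyRing n) • b₀ ∈ B.gr (m+1) := by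
      intro i
      have := B.smul_mem' 1 m (X i) (X_mem_grading i) b₀ hb₀mem
      simpa using this
    have hex : ∀ i : Fin (n+1), ∃ x ∈ A.gr (m+1), f.toFun x = (X i : PolyRing n) • b₀ :=
      fun i => mem_range_piece f (hXbgr i) (hXb i)
    choose a hamem haf using hex
    have hsym : ∀ i j, (X i : PolyRing n) • a j = (X j : PolyRing n) • a i := by
      intro i j
      apply hses.inj
      rw [map_smul, map_smul, haf, haf, smul_smul, smul_smul, mul_comm]
    obtain ⟨a₀, ha₀mem, ha₀⟩ := crux A hA m hm a hamem hsym
    refine ⟨b₀ - f.toFun a₀, sub_mem hb₀mem (f.map_gr _ _ ha₀mem), ?_, ?_⟩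
    · rw [map_sub, hb₀, hgf, sub_zero]
    · intro i
      rw [smul_sub, ← map_smul, ha₀, haf, sub_self]
  choose sec hsecmem hsecg hseckill using goodlift
  -- Step 2: the ℂ-linear section σ
  set bc := Module.Basis.ofVectorSpace ℂ C.M with hbc
  set σ : C.M →ₗ[ℂ] B.M := bc.constr ℂ (fun t => sec (bc t)) with hσ
  have hσbasis : ∀ t, σ (bc t) = sec (bc t) := fun t => bc.constr_basis ℂ _ t
  have hσg : ∀ c : C.M, g.toFun (σ c) = c := by
    have hL : ((g.toFun.restrictScalars ℂ).comp σ) = LinearMap.id := by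
      refine bc.ext fun t => ?_
      simp only [LinearMap.coe_comp, Function.comp_apply, LinearMap.coe_restrictScalars,
        LinearMap.id_coe, id_eq]
      rw [hσbasis, hsecg]
    intro c
    exact congrArg (fun (L : C.M →ₗ[ℂ] C.M) => L c) hL
  have hσgr : ∀ c : C.M, σ c ∈ B.gr m := by
    intro c
    have hle : ⊤ ≤ (B.gr m).comap σ := by
      rw [← bc.span_eq]
      refine Submodule.span_le.2 ?_
      rintro _ ⟨t, rfl⟩
      simp only [Submodule.mem_comap, SetLike.mem_coe]
      rw [hσbasis]
      exact hsecmem _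
    exact hle trivial
  have hσkill : ∀ (i : Fin (n+1)) (c : C.M), (X i : PolyRing n) • σ c = 0 := by
    intro i
    have hK : (((LinearMap.lsmul (PolyRing n) B.M (X i)).restrictScalars ℂ).comp σ)
        = 0 := by
      refine bc.ext fun t => ?_
      simp only [LinearMap.coe_comp, Function.comp_apply, LinearMap.coe_restrictScalars,
        LinearMap.lsmul_apply, LinearMap.zero_apply]
      rw [hσbasis, hseckill]
    intro c
    exact congrArg (fun (L : C.M →ₗ[ℂ] B.M) => L c) hK
  -- Step 3: the retraction
  set e : A.M ≃ₗ[PolyRing n] LinearMap.range f.toFun :=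
    LinearEquiv.ofInjective f.toFun hses.inj with he
  have hqmem : ∀ b : B.M, b - σ (g.toFun b) ∈ LinearMap.range f.toFun := by
    intro b
    rw [hses.exact, LinearMap.mem_ker, map_sub, hσg, sub_self]
  set r0 : B.M → A.M := fun b => e.symm ⟨b - σ (g.toFun b), hqmem b⟩ with hr0
  have hfr0 : ∀ b : B.M, f.toFun (r0 b) = b - σ (g.toFun b) := by
    intro b
    have h1 : e (r0 b) = ⟨b - σ (g.toFun b), hqmem b⟩ := by
      rw [hr0]
      exact e.apply_symm_apply _
    have h2 : (e (r0 b) : B.M) = f.toFun (r0 b) := rfl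
    rw [← h2, h1]
  have hadd : ∀ b₁ b₂ : B.M, r0 (b₁ + b₂) = r0 b₁ + r0 b₂ := by
    intro b₁ b₂
    apply hses.inj
    rw [map_add, hfr0, hfr0, hfr0, map_add, map_add]
    abel
  have hsmul : ∀ (s : PolyRing n) (b : B.M), r0 (s • b) = s • r0 b := by
    intro s b
    apply hses.inj
    have h1 : f.toFun (r0 (s • b)) = s • b - σ (g.toFun (s • b)) := hfr0 _
    have h2 : f.toFun (s • r0 b) = s • (b - σ (g.toFun b)) := by
      rw [map_smul, hfr0]
    rw [h1, h2, smul_sub]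
    congr 1
    rw [map_smul, hCconst, map_smul, smul_of_ann (fun i => hσkill i (g.toFun b)) s]
  have hrgr : ∀ i : ℤ, ∀ b ∈ B.gr i, r0 b ∈ A.gr i := by
    intro i b hb
    have hσgb : σ (g.toFun b) ∈ B.gr i := by
      by_cases him : i = m
      · subst him
        exact hσgr _
      · have hgb : g.toFun b ∈ C.gr i := g.map_gr i b hb
        rw [hC.1 i him, Submodule.mem_bot] at hgb
        rw [hgb, map_zero]
        exact Submodule.zero_mem _
    exact inj_piece f hses.inj (by rw [hfr0]; exact sub_mem hb hσgb)
  refine ⟨⟨{ toFun := r0, map_add' := hadd, map_smul' := hsmul }, hrgr⟩, ?_⟩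
  have hrid : ∀ x : A.M, r0 (f.toFun x) = x := by
    intro x
    apply hses.inj
    rw [hfr0, hgf, map_zero, sub_zero]
  apply GrHom.ext
  apply LinearMap.ext
  intro x
  exact hrid x

end Final
end

section
/- Let S = ℂ[x₀,…,xₙ], C a linear graded S-module, and i > 0 an integer. If Ext¹_S(C_{≥i}, C)₀ = 0, then Ext¹_S(C_{≥i}, C_{≥i})₀ = 0. -/
open DirectSum

set_option maxHeartbeats 1000000
set_option synthInstance.maxHeartbeats 400000

noncomputable section Helpers

variable {M N : Type} [AddCommGroup M] [AddCommGroup N] [Module ℂ M] [Module ℂ N]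
  (p : ℤ → Submodule ℂ M) (q : ℤ → Submodule ℂ N)

/-- Lift a graded linear map to direct sums of graded pieces. -/
def grLift (φ : M →ₗ[ℂ] N) (hφ : ∀ j, ∀ x ∈ p j, φ x ∈ q j) :
    (⨁ j, p j) →+ (⨁ j, q j) :=
  DirectSum.toAddMonoid fun j =>
    (DirectSum.of (fun j => q j) j).comp
      { toFun := fun x => ⟨φ (x : M), hφ j (x : M) x.2⟩
        map_zero' := Subtype.ext (map_zero φ)
        map_add' := fun a b => Subtype.ext (map_add φ (a:M) (b:M)) }

lemma grLift_of (φ : M →ₗ[ℂ] N) (hφ) (j : ℤ) (x : p j) :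
    grLift p q φ hφ (DirectSum.of (fun j => p j) j x)
      = DirectSum.of (fun j => q j) j ⟨φ (x : M), hφ j (x : M) x.2⟩ := by
  simp [grLift, DirectSum.toAddMonoid_of]

lemma grLift_coe (φ : M →ₗ[ℂ] N) (hφ) (σ : ⨁ j, p j) :
    DirectSum.coeAddMonoidHom q (grLift p q φ hφ σ) = φ (DirectSum.coeAddMonoidHom p σ) := by
  induction σ using DirectSum.induction_on with
  | zero => simp
  | of j x => rw [grLift_of]; simp [DirectSum.coeAddMonoidHom_of]
  | add x y hx hy => rw [map_add, map_add, hx, hy, map_add, map_add]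

lemma grLift_apply (φ : M →ₗ[ℂ] N) (hφ) (σ : ⨁ j, p j) (k : ℤ) :
    ((grLift p q φ hφ σ) k : N) = φ (σ k : M) := by
  induction σ using DirectSum.induction_on with
  | zero => simp
  | of j x =>
    rw [grLift_of]
    rcases eq_or_ne j k with rfl | h
    · rw [DirectSum.of_eq_same, DirectSum.of_eq_same]
    · rw [DirectSum.of_eq_of_ne _ _ _ h.symm, DirectSum.of_eq_of_ne _ _ _ h.symm]
      simp
  | add x y hx hy =>
    rw [map_add, DirectSum.add_apply, DirectSum.add_apply, Submodule.coe_add,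
      Submodule.coe_add, hx, hy, map_add]

/-- A representative supported away from `k`. -/
lemma exists_rep_away {m : M} {k : ℤ} (hm : m ∈ ⨆ (j : ℤ) (_ : j ≠ k), p j) :
    ∃ σ : ⨁ j, p j, DirectSum.coeAddMonoidHom p σ = m ∧ σ k = 0 := by
  rw [iSup_subtype'] at hm
  refine Submodule.iSup_induction (motive := fun m => ∃ σ : ⨁ j, p j,
      DirectSum.coeAddMonoidHom p σ = m ∧ σ k = 0) _ hm ?_ ?_ ?_
  · rintro ⟨j, hj⟩ x hx
    exact ⟨DirectSum.of (fun j => (p j : Type)) j ⟨x, hx⟩,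
      by simp [DirectSum.coeAddMonoidHom_of],
      by rw [DirectSum.of_eq_of_ne _ _ _ hj.symm]⟩
  · exact ⟨0, by simp, rfl⟩
  · rintro x y ⟨σ, hσ, hσk⟩ ⟨ρ, hρ, hρk⟩
    exact ⟨σ + ρ, by simp [hσ, hρ], by simp [DirectSum.add_apply, hσk, hρk]⟩

end Helpers

section Prod
open DirectSum
variable {M N : Type} [AddCommGroup M] [AddCommGroup N] [Module ℂ M] [Module ℂ N]
  (p : ℤ → Submodule ℂ M) (q : ℤ → Submodule ℂ N)

lemma prod_internal (hp : DirectSum.IsInternal p) (hq : DirectSum.IsInternal q) :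
    DirectSum.IsInternal (fun k => (p k).prod (q k)) := by
  set P : ℤ → Submodule ℂ (M × N) := fun k => (p k).prod (q k) with hP
  have hfst : ∀ j, ∀ x ∈ P j, (LinearMap.fst ℂ M N) x ∈ p j := fun j x hx => hx.1
  have hsnd : ∀ j, ∀ x ∈ P j, (LinearMap.snd ℂ M N) x ∈ q j := fun j x hx => hx.2
  have hinl : ∀ j, ∀ x ∈ p j, (LinearMap.inl ℂ M N) x ∈ P j :=
    fun j x hx => ⟨hx, (q j).zero_mem⟩
  have hinr : ∀ j, ∀ x ∈ q j, (LinearMap.inr ℂ M N) x ∈ P j :=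
    fun j x hx => ⟨(p j).zero_mem, hx⟩
  constructor
  · -- injective
    intro σ ρ hσρ
    have key : ∀ σ : ⨁ j, P j, DirectSum.coeAddMonoidHom P σ = 0 → σ = 0 := by
      intro σ hσ
      have h1 : grLift P p (LinearMap.fst ℂ M N) hfst σ = 0 := by
        apply hp.injective
        rw [grLift_coe, hσ]; simp
      have h2 : grLift P q (LinearMap.snd ℂ M N) hsnd σ = 0 := by
        apply hq.injective
        rw [grLift_coe, hσ]; simp
      refine DFinsupp.ext fun k => ?_
      have ha := grLift_apply P p (LinearMap.fst ℂ M N) hfst σ k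
      have hb := grLift_apply P q (LinearMap.snd ℂ M N) hsnd σ k
      rw [h1] at ha; rw [h2] at hb
      have : ((σ k : M × N)) = 0 := by
        ext
        · simpa using ha.symm
        · simpa using hb.symm
      exact Subtype.ext (by rw [this]; rfl)
    have : σ - ρ = 0 := key _ (by rw [map_sub, hσρ, sub_self])
    exact sub_eq_zero.mp this
  · -- surjective
    rintro ⟨c, y⟩
    obtain ⟨σc, hσc⟩ := hp.surjective c
    obtain ⟨σy, hσy⟩ := hq.surjective y
    refine ⟨grLift p P (LinearMap.inl ℂ M N) hinl σc
      + grLift q P (LinearMap.inr ℂ M N) hinr σy, ?_⟩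
    rw [AddMonoidHom.map_add, grLift_coe, grLift_coe, hσc, hσy]
    simp

end Prod

section Quot
open DirectSum
variable {A : Type} [Ring A] [Algebra ℂ A]
variable {M : Type} [AddCommGroup M] [Module A M] [Module ℂ M] [IsScalarTower ℂ A M]

lemma quot_internal (gr : ℤ → Submodule ℂ M) (hgr : DirectSum.IsInternal gr)
    (K : Submodule A M)
    (hK : ∀ σ : ⨁ j, gr j, DirectSum.coeAddMonoidHom gr σ ∈ K → ∀ k, ((σ k : M)) ∈ K) :
    DirectSum.IsInternal (fun k => (gr k).map (K.mkQ.restrictScalars ℂ)) := by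
  set πℂ : M →ₗ[ℂ] (M ⧸ K) := K.mkQ.restrictScalars ℂ with hπ
  rw [DirectSum.isInternal_submodule_iff_iSupIndep_and_iSup_eq_top]
  constructor
  · rw [iSupIndep_def]
    intro k
    rw [Submodule.disjoint_def]
    intro x hxk hx
    obtain ⟨m, hm, rfl⟩ := hxk
    have hx' : πℂ m ∈ Submodule.map πℂ (⨆ (j) (_ : j ≠ k), gr j) := by
      simpa [Submodule.map_iSup] using hx
    obtain ⟨m', hm', hmm'⟩ := hx'
    obtain ⟨σ', hσ', hσk'⟩ := exists_rep_away gr hm'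
    have hdiff : m - m' ∈ K := by
      have : πℂ (m - m') = 0 := by rw [map_sub, hmm', sub_self]
      simpa using (Submodule.Quotient.mk_eq_zero K).mp this
    set τ : ⨁ j, gr j := DirectSum.of (fun j => gr j) k ⟨m, hm⟩ - σ' with hτ
    have hcoe : DirectSum.coeAddMonoidHom gr τ = m - m' := by
      rw [hτ, map_sub, DirectSum.coeAddMonoidHom_of, hσ']
    have hmK : m ∈ K := by
      have := hK τ (by rw [hcoe]; exact hdiff) k
      rw [hτ] at this
      simpa [DirectSum.sub_apply, DirectSum.of_eq_same, hσk'] using this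
    show πℂ m = 0
    exact (Submodule.Quotient.mk_eq_zero K).mpr hmK
  · rw [← Submodule.map_iSup, hgr.submodule_iSup_eq_top]
    rw [Submodule.map_top, LinearMap.range_eq_top]
    exact fun x => Quotient.inductionOn' x fun m => ⟨m, rfl⟩
end Quot

section MainLemma
open DirectSum
variable {A : Type} [Ring A] [Algebra ℂ A] {𝒜 : ℕ → Submodule ℂ A}

lemma ext1zero_of_truncation (C T : GrMod 𝒜) (i : ℤ) (ι : GrHom T C)
    (hT : IsTruncation C T i ι) (hvanish : Ext1Zero T C) : Ext1Zero T T := by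
  intro Y f g hses
  -- Step 1: Y vanishes in degrees < i
  have hYlow : ∀ k, k < i → Y.gr k = ⊥ := by
    intro k hk
    rw [Submodule.eq_bot_iff]
    intro y hy
    have hgy : g.toFun y = 0 := by
      have := g.map_gr k y hy
      rw [hT.low k hk] at this
      simpa using this
    have hyr : y ∈ LinearMap.range f.toFun := by
      rw [hses.exact]; exact LinearMap.mem_ker.mpr hgy
    obtain ⟨t, rfl⟩ := hyr
    obtain ⟨τ, hτ⟩ := T.decomp.surjective t
    set σ : ⨁ j, Y.gr j :=
      grLift T.gr Y.gr (f.toFun.restrictScalars ℂ) (fun j x hx => f.map_gr j x hx) τ with hσdef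
    have hσ : DirectSum.coeAddMonoidHom Y.gr σ = f.toFun t := by
      rw [hσdef]; exact (grLift_coe T.gr Y.gr _ _ τ).trans (by rw [hτ]; rfl)
    have hof : DirectSum.coeAddMonoidHom Y.gr
        (DirectSum.of (fun j => Y.gr j) k ⟨f.toFun t, hy⟩) = f.toFun t :=
      DirectSum.coeAddMonoidHom_of _ _ _
    have hστ : σ = DirectSum.of (fun j => Y.gr j) k ⟨f.toFun t, hy⟩ :=
      Y.decomp.injective (hσ.trans hof.symm)
    have h1 : ((σ k : Y.M)) = f.toFun ((τ k : T.M)) :=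
      grLift_apply T.gr Y.gr _ _ τ k
    have h2 : ((τ k : T.M)) = 0 := by
      have hb : ((τ k : T.M)) ∈ (⊥ : Submodule ℂ T.M) := by
        rw [← hT.low k hk]; exact (τ k).2
      simpa using hb
    have : f.toFun t = ((σ k : Y.M)) := by rw [hστ, DirectSum.of_eq_same]
    rw [this, h1, h2, map_zero]
  -- Step 2: the pushout
  set φK : T.M →ₗ[A] C.M × Y.M := (ι.toFun).prod (-f.toFun) with hφK
  set K : Submodule A (C.M × Y.M) := LinearMap.range φK with hKdef
  set p : ℤ → Submodule ℂ (C.M × Y.M) := fun k => (C.gr k).prod (Y.gr k) with hpdef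
  have hp : DirectSum.IsInternal p := prod_internal _ _ C.decomp Y.decomp
  have hφKgr : ∀ j, ∀ x ∈ T.gr j, (φK.restrictScalars ℂ) x ∈ p j := by
    intro j x hx
    refine ⟨ι.map_gr j x hx, ?_⟩
    show (-f.toFun) x ∈ Y.gr j
    rw [LinearMap.neg_apply]
    exact (Y.gr j).neg_mem (f.map_gr j x hx)
  have hK : ∀ σ : ⨁ j, p j, DirectSum.coeAddMonoidHom p σ ∈ K → ∀ k, ((σ k : C.M × Y.M)) ∈ K := by
    intro σ hσ k
    obtain ⟨t, ht⟩ := hσ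
    obtain ⟨τ, hτ⟩ := T.decomp.surjective t
    have hcoe : DirectSum.coeAddMonoidHom p (grLift T.gr p (φK.restrictScalars ℂ) hφKgr τ)
        = DirectSum.coeAddMonoidHom p σ := by
      rw [grLift_coe, hτ]; exact ht
    have hστ : grLift T.gr p (φK.restrictScalars ℂ) hφKgr τ = σ := hp.injective hcoe
    have := grLift_apply T.gr p (φK.restrictScalars ℂ) hφKgr τ k
    rw [hστ] at this
    rw [this]
    exact ⟨(τ k : T.M), rfl⟩
  set πA : (C.M × Y.M) →ₗ[A] ((C.M × Y.M) ⧸ K) := K.mkQ with hπA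
  set πℂ : (C.M × Y.M) →ₗ[ℂ] ((C.M × Y.M) ⧸ K) := K.mkQ.restrictScalars ℂ with hπℂ
  set Y' : GrMod 𝒜 :=
    { M := (C.M × Y.M) ⧸ K
      gr := fun k => (p k).map πℂ
      decomp := quot_internal p hp K hK
      smul_mem' := by
        intro d k s hs m hm
        obtain ⟨x, hx, rfl⟩ := hm
        have : s • (πℂ x) = πℂ (s • x) := (πA.map_smul s x).symm
        rw [this]
        exact ⟨s • x, ⟨C.smul_mem' d k s hs x.1 hx.1, Y.smul_mem' d k s hs x.2 hx.2⟩, rfl⟩ }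
    with hY'def
  set f' : GrHom C Y' := ⟨πA ∘ₗ LinearMap.inl A C.M Y.M,
    fun k m hm => ⟨(m, 0), ⟨hm, (Y.gr k).zero_mem⟩, rfl⟩⟩ with hf'def
  have hKle : K ≤ LinearMap.ker (g.toFun ∘ₗ LinearMap.snd A C.M Y.M) := by
    rintro x ⟨t, rfl⟩
    have hft : g.toFun (f.toFun t) = 0 := by
      have : f.toFun t ∈ LinearMap.ker g.toFun := by
        rw [← hses.exact]; exact ⟨t, rfl⟩
      exact this
    rw [LinearMap.mem_ker]
    show g.toFun ((-f.toFun) t) = 0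
    rw [LinearMap.neg_apply, map_neg, hft, neg_zero]
  set g' : GrHom Y' T := ⟨K.liftQ (g.toFun ∘ₗ LinearMap.snd A C.M Y.M) hKle, by
    rintro k m ⟨x, hx, rfl⟩
    show K.liftQ _ hKle (Submodule.Quotient.mk x) ∈ T.gr k
    rw [Submodule.liftQ_apply]
    exact g.map_gr k x.2 hx.2⟩ with hg'def
  have hses' : IsSES f' g' := by
    constructor
    · -- injectivity of f'
      intro a b hab
      have : πA (a - b, 0) = 0 := by
        have : πA (a, 0) = πA (b, 0) := hab
        rw [show ((a - b, (0 : Y.M)) : C.M × Y.M) = (a, 0) - (b, 0) by simp,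
          map_sub, this, sub_self]
      have hmem : ((a - b, (0 : Y.M)) : C.M × Y.M) ∈ K :=
        (Submodule.Quotient.mk_eq_zero K).mp this
      obtain ⟨t, ht⟩ := hmem
      have ht1 : ι.toFun t = a - b := congrArg Prod.fst ht
      have ht2 : -f.toFun t = 0 := congrArg Prod.snd ht
      have : t = 0 := hses.inj (by simpa using ht2)
      rw [this, map_zero] at ht1
      exact sub_eq_zero.mp ht1.symm
    · -- surjectivity of g'
      intro t
      obtain ⟨y, hy⟩ := hses.surj t
      exact ⟨πA (0, y), by exact hy⟩
    · -- exactness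
      apply le_antisymm
      · rintro x ⟨c, rfl⟩
        show K.liftQ _ hKle (πA (c, 0)) = 0
        rw [show πA (c, 0) = Submodule.Quotient.mk (c, 0) from rfl, Submodule.liftQ_apply]
        simp
      · rintro x hx
        obtain ⟨⟨c, y⟩, rfl⟩ := Submodule.Quotient.mk_surjective K x
        have hgy : g.toFun y = 0 := by
          have := LinearMap.mem_ker.mp hx
          rw [show (Submodule.Quotient.mk (c, y) : (C.M × Y.M) ⧸ K)
            = Submodule.Quotient.mk (p := K) (c, y) from rfl] at this
          exact this
        have : y ∈ LinearMap.range f.toFun := by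
          rw [hses.exact]; exact LinearMap.mem_ker.mpr hgy
        obtain ⟨t, rfl⟩ := this
        refine ⟨c + ι.toFun t, ?_⟩
        show (Submodule.Quotient.mk (c + ι.toFun t, 0) : (C.M × Y.M) ⧸ K)
          = Submodule.Quotient.mk (c, f.toFun t)
        rw [Submodule.Quotient.eq]
        refine ⟨t, ?_⟩
        show (ι.toFun t, (-f.toFun) t) = (c + ι.toFun t, 0) - (c, f.toFun t)
        rw [LinearMap.neg_apply]
        ext <;> simp
  obtain ⟨r', hr'⟩ := hvanish Y' f' g' hses'
  set jY : GrHom Y Y' := ⟨πA ∘ₗ LinearMap.inr A C.M Y.M,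
    fun k m hm => ⟨(0, m), ⟨(C.gr k).zero_mem, hm⟩, rfl⟩⟩ with hjdef
  set r : GrHom Y C := r'.comp jY with hrdef
  have hr'f' : ∀ c : C.M, r'.toFun (f'.toFun c) = c := by
    intro c
    have h := congrArg GrHom.toFun hr'
    exact DFunLike.congr_fun h c
  have hrf : ∀ t : T.M, r.toFun (f.toFun t) = ι.toFun t := by
    intro t
    have hmk : πA (0, f.toFun t) = πA (ι.toFun t, 0) := by
      show (Submodule.Quotient.mk (0, f.toFun t) : (C.M × Y.M) ⧸ K)
        = Submodule.Quotient.mk (ι.toFun t, 0)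
      rw [Submodule.Quotient.eq]
      refine ⟨-t, ?_⟩
      show (ι.toFun (-t), (-f.toFun) (-t)) = (0, f.toFun t) - (ι.toFun t, 0)
      simp
    show r'.toFun (πA (0, f.toFun t)) = ι.toFun t
    rw [hmk]
    exact hr'f' (ι.toFun t)
  have hrange : ∀ y : Y.M, r.toFun y ∈ LinearMap.range ι.toFun := by
    intro y
    have hy : y ∈ ⨆ k, Y.gr k := by
      rw [Y.decomp.submodule_iSup_eq_top]; exact Submodule.mem_top
    refine Submodule.iSup_induction
      (motive := fun y => r.toFun y ∈ LinearMap.range ι.toFun) _ hy ?_ ?_ ?_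
    · intro k m hm
      show r.toFun m ∈ LinearMap.range ι.toFun
      rcases lt_or_ge k i with hk | hk
      · rw [hYlow k hk] at hm
        have hm0 : m = 0 := by simpa using hm
        rw [hm0, map_zero]; exact zero_mem _
      · obtain ⟨t, _, htm⟩ := hT.onto k hk (r.toFun m) (r.map_gr k m hm)
        exact ⟨t, htm⟩
    · show r.toFun 0 ∈ LinearMap.range ι.toFun
      rw [map_zero]; exact zero_mem _
    · intro a b ha hb
      show r.toFun (a + b) ∈ LinearMap.range ι.toFun
      rw [map_add]; exact add_mem ha hb
  set e : T.M ≃ₗ[A] LinearMap.range ι.toFun := LinearEquiv.ofInjective ι.toFun hT.inj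
    with hedef
  set rt : Y.M →ₗ[A] T.M := (e.symm : LinearMap.range ι.toFun →ₗ[A] T.M) ∘ₗ
    (r.toFun.codRestrict (LinearMap.range ι.toFun) hrange) with hrtdef
  have hιrt : ∀ y, ι.toFun (rt y) = r.toFun y := fun y =>
    LinearEquiv.ofInjective_symm_apply (f := ι.toFun) (h := hT.inj)
      ((r.toFun.codRestrict (LinearMap.range ι.toFun) hrange) y)
  have hrtgr : ∀ k, ∀ m ∈ Y.gr k, rt m ∈ T.gr k := by
    intro k m hm
    rcases lt_or_ge k i with hk | hk
    · rw [hYlow k hk] at hm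
      have hm0 : m = 0 := by simpa using hm
      rw [hm0, map_zero]; exact zero_mem _
    · obtain ⟨t, ht, htm⟩ := hT.onto k hk (r.toFun m) (r.map_gr k m hm)
      have hrtm : rt m = t := hT.inj (by rw [hιrt]; exact htm.symm)
      rw [hrtm]; exact ht
  refine ⟨⟨rt, hrtgr⟩, ?_⟩
  apply GrHom.ext
  show rt ∘ₗ f.toFun = LinearMap.id
  apply LinearMap.ext
  intro t
  apply hT.inj
  show ι.toFun (rt (f.toFun t)) = ι.toFun t
  rw [hιrt, hrf]

end MainLemma


/-- Lemma 1.3: let `C` be a linear graded module over `S = ℂ[x₀,…,xₙ]`, let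
`i > 0`, and let `T = C_{≥i}` be the truncation of `C` (realized by the
inclusion `ι : T → C`).  If `Ext¹(C_{≥i}, C)₀ = 0` (every extension of `T` by
`C` splits) then `Ext¹(C_{≥i}, C_{≥i})₀ = 0` (every extension of `T` by `T`
splits). -/
theorem stmt7 {n : ℕ} (C : GrMod (polyGrading n)) (hC : IsLinearModule C)
    (i : ℤ) (hi : 0 < i)
    (T : GrMod (polyGrading n)) (ι : GrHom T C) (hT : IsTruncation C T i ι)
    (hvanish : Ext1Zero T C) :
    Ext1Zero T T :=   ext1zero_of_truncation C T i ι hT hvanish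
end

section
/- Let M, E be graded S-modules with linear presentations over S = ℂ[x₀,…,xₙ], and h : M → E a degree-zero graded homomorphism such that the induced map M/J²M → E/J²E is a split monomorphism of S/J²-modules. Then h is a split monomorphism. -/
noncomputable section AuxLemmas

open MvPolynomial

section Internal

variable {V : Type} [AddCommGroup V] [Module ℂ V]

/-- Projection onto the degree-`k` component of an internal decomposition. -/
def grProj (gr : ℤ → Submodule ℂ V) (hgr : DirectSum.IsInternal gr) (k : ℤ) : V →ₗ[ℂ] V :=
  (gr k).subtype ∘ₗ (DirectSum.component ℂ ℤ (fun i => ↥(gr i)) k) ∘ₗ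
    (LinearEquiv.ofBijective (DirectSum.coeLinearMap gr) hgr).symm.toLinearMap

lemma grProj_apply (gr : ℤ → Submodule ℂ V) (hgr : DirectSum.IsInternal gr) (k : ℤ) (x : V) :
    grProj gr hgr k x
      = (((LinearEquiv.ofBijective (DirectSum.coeLinearMap gr) hgr).symm x) k : V) := rfl

lemma grProj_mem (gr : ℤ → Submodule ℂ V) (hgr : DirectSum.IsInternal gr) (k : ℤ) (x : V) :
    grProj gr hgr k x ∈ gr k := by
  rw [grProj_apply]; exact Submodule.coe_mem _

lemma grProj_of_mem_same {gr : ℤ → Submodule ℂ V} (hgr : DirectSum.IsInternal gr) {k : ℤ}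
    {x : V} (hx : x ∈ gr k) : grProj gr hgr k x = x := by
  rw [grProj_apply, hgr.ofBijective_coeLinearMap_of_mem hx]

lemma grProj_of_mem_ne {gr : ℤ → Submodule ℂ V} (hgr : DirectSum.IsInternal gr) {j k : ℤ}
    (hjk : j ≠ k) {x : V} (hx : x ∈ gr j) : grProj gr hgr k x = 0 := by
  rw [grProj_apply, hgr.ofBijective_coeLinearMap_of_mem_ne hjk hx]
  rfl

lemma gr_eq_of (gr : ℤ → Submodule ℂ V) (hgr : DirectSum.IsInternal gr)
    (A : ℤ → Submodule ℂ V) (hle : ∀ k, A k ≤ gr k) (htop : ∀ x : V, x ∈ ⨆ k, A k) (k : ℤ) :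
    gr k = A k := by
  refine le_antisymm (fun x hx => ?_) (hle k)
  have key : grProj gr hgr k x ∈ A k := by
    refine Submodule.iSup_induction (motive := fun v => grProj gr hgr k v ∈ A k) A (htop x)
      ?_ (by simp) ?_
    · intro j y hy
      by_cases hj : j = k
      · subst hj
        rw [grProj_of_mem_same hgr (hle j hy)]; exact hy
      · rw [grProj_of_mem_ne hgr hj (hle j hy)]; exact zero_mem _
    · intro a b ha hb; rw [map_add]; exact add_mem ha hb
  rwa [grProj_of_mem_same hgr hx] at key

end Internal

section Poly

lemma constantCoeff_of_mem_polyJ {n : ℕ} {s : PolyRing n} (hs : s ∈ polyJ n) :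
    constantCoeff s = 0 := by
  refine Submodule.span_induction (p := fun x _ => constantCoeff x = 0) ?_ (map_zero _) ?_ ?_ hs
  · rintro x ⟨i, rfl⟩; simp
  · intro x y _ _ hx hy; rw [map_add, hx, hy, add_zero]
  · intro a x _ hx
    rw [smul_eq_mul, map_mul, hx, mul_zero]

lemma degree_add' {σ : Type*} (u v : σ →₀ ℕ) :
    (u + v).degree = u.degree + v.degree := by
  simp only [Finsupp.degree_eq_weight_one, map_add]

lemma homogeneousComponent_eq_zero_of_mem_Jsq {n : ℕ} {s : PolyRing n}
    (hs : s ∈ polyJ n ^ 2) {d : ℕ} (hd : d ≤ 1) : homogeneousComponent d s = 0 := by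
  rw [pow_two] at hs
  refine Submodule.mul_induction_on hs ?_ ?_
  · intro a ha b hb
    apply MvPolynomial.ext; intro m
    rw [coeff_homogeneousComponent, coeff_zero]
    split_ifs with hm
    · rw [coeff_mul]
      refine Finset.sum_eq_zero fun uv huv => ?_
      have hsum : uv.1.degree + uv.2.degree = d := by
        rw [← degree_add', Finset.HasAntidiagonal.mem_antidiagonal.mp huv, hm]
      have h01 : uv.1.degree = 0 ∨ uv.2.degree = 0 := by omega
      rcases h01 with h | h
      · have h0 : uv.1 = 0 := (Finsupp.degree_eq_zero_iff _).mp h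
        have : coeff uv.1 a = 0 := by
          rw [h0]; exact constantCoeff_of_mem_polyJ ha
        rw [this, zero_mul]
      · have h0 : uv.2 = 0 := (Finsupp.degree_eq_zero_iff _).mp h
        have : coeff uv.2 b = 0 := by
          rw [h0]; exact constantCoeff_of_mem_polyJ hb
        rw [this, mul_zero]
    · rfl
  · intro a b ha hb; rw [map_add, ha, hb, add_zero]

lemma degree_single_one {σ : Type*} (i : σ) : (Finsupp.single i 1).degree = 1 := by
  simp [Finsupp.degree_single]

lemma X_mem_polyJ {n : ℕ} (i : Fin (n+1)) : (X i : PolyRing n) ∈ polyJ n :=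
  Ideal.subset_span ⟨i, rfl⟩

lemma monomial_mem_Jsq {n : ℕ} {m : Fin (n+1) →₀ ℕ} (hm : 2 ≤ m.degree) (c : ℂ) :
    (monomial m c : PolyRing n) ∈ polyJ n ^ 2 := by
  obtain ⟨i, hi⟩ : ∃ i, m i ≠ 0 := by
    by_contra hcon; push_neg at hcon
    have : m = 0 := Finsupp.ext fun i => hcon i
    rw [this, map_zero] at hm; omega
  set m' : Fin (n+1) →₀ ℕ := m - Finsupp.single i 1 with hm'def
  have hmi : m = Finsupp.single i 1 + m' := by
    ext l
    simp only [hm'def, Finsupp.add_apply, Finsupp.tsub_apply, Finsupp.single_apply]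
    split_ifs with hl
    · subst hl; omega
    · omega
  have hdm : m.degree = 1 + m'.degree := by
    rw [hmi, degree_add', degree_single_one]
  obtain ⟨j, hj⟩ : ∃ j, m' j ≠ 0 := by
    by_contra hcon; push_neg at hcon
    have : m' = 0 := Finsupp.ext fun j => hcon j
    rw [this, map_zero] at hdm; omega
  set m'' : Fin (n+1) →₀ ℕ := m' - Finsupp.single j 1 with hm''def
  have hmj : m' = Finsupp.single j 1 + m'' := by
    ext l
    simp only [hm''def, Finsupp.add_apply, Finsupp.tsub_apply, Finsupp.single_apply]
    split_ifs with hl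
    · subst hl; omega
    · omega
  have hX : ∀ t : Fin (n+1), (X t : PolyRing n) = monomial (Finsupp.single t 1) 1 := by
    intro t; rw [← pow_one (X t), X_pow_eq_monomial]
  have hfact : (monomial m c : PolyRing n) = (X i * X j) * monomial m'' c := by
    rw [hX, hX, monomial_mul, monomial_mul, hmi, hmj, one_mul, one_mul, add_assoc]
  rw [hfact]
  refine Ideal.mul_mem_right _ _ ?_
  rw [pow_two]
  exact Ideal.mul_mem_mul (X_mem_polyJ i) (X_mem_polyJ j)

lemma homogeneous_mem_Jsq {n : ℕ} {d : ℕ} (hd : 2 ≤ d) {s : PolyRing n}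
    (hs : s ∈ polyGrading n d) : s ∈ polyJ n ^ 2 := by
  rw [mem_homogeneousSubmodule] at hs
  rw [s.as_sum]
  refine Submodule.sum_mem _ fun m hm => ?_
  refine monomial_mem_Jsq ?_ _
  have : m.degree = d := by
    rw [Finsupp.degree_eq_weight_one]
    exact hs (mem_support_iff.mp hm)
  omega

lemma exists_C_of_mem_zero {n : ℕ} {s : PolyRing n} (hs : s ∈ polyGrading n 0) :
    ∃ a : ℂ, s = algebraMap ℂ (PolyRing n) a := by
  refine ⟨coeff 0 s, ?_⟩
  have h := homogeneousComponent_of_mem hs (m := 0)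
  rw [if_pos rfl] at h
  conv_lhs => rw [← h]
  rw [homogeneousComponent_zero, algebraMap_eq]

end Poly

section GrModAux

variable {n : ℕ}

/-- The set of homogeneous multiples of degree `k` of the elements `b i`. -/
def grSet (X : GrMod (polyGrading n)) {ι : Type} (b : ι → X.M) (k : ℤ) : Set X.M :=
  {x | ∃ (d : ℕ) (s : PolyRing n) (i : ι), (d : ℤ) = k ∧ s ∈ polyGrading n d ∧ s • b i = x}

lemma freeGr_eq (P : GrMod (polyGrading n)) {ι : Type} (b : Module.Basis ι (PolyRing n) P.M)
    (hb : ∀ j, b j ∈ P.gr 0) (k : ℤ) :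
    P.gr k = Submodule.span ℂ (grSet P b k) := by
  refine gr_eq_of P.gr P.decomp (fun k => Submodule.span ℂ (grSet P (⇑b) k)) ?_ ?_ k
  · intro k
    rw [Submodule.span_le]
    rintro x ⟨d, s, i, hd, hs, rfl⟩
    have := P.smul_mem' d 0 s hs (b i) (hb i)
    rwa [zero_add, hd] at this
  · have hhom : ∀ (d : ℕ) (s : PolyRing n), s ∈ polyGrading n d →
        ∀ x ∈ ⨆ k, Submodule.span ℂ (grSet P b k),
          s • x ∈ ⨆ k, Submodule.span ℂ (grSet P b k) := by
      intro d s hsd x hx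
      refine Submodule.iSup_induction
        (motive := fun v => s • v ∈ ⨆ k, Submodule.span ℂ (grSet P b k)) _ hx ?_
        (by show s • (0:_) ∈ _; rw [smul_zero]; exact zero_mem _) ?_
      · intro k y hy
        refine Submodule.span_induction
          (p := fun v _ => s • v ∈ ⨆ k, Submodule.span ℂ (grSet P b k)) ?_
          (by show s • (0:_) ∈ _; rw [smul_zero]; exact zero_mem _) ?_ ?_ hy
        · rintro v ⟨d', t, i, hd', ht, rfl⟩
          rw [smul_smul]
          refine Submodule.mem_iSup_of_mem (k + d) (Submodule.subset_span ?_)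
          refine ⟨d + d', s * t, i, by push_cast; omega, ?_, rfl⟩
          rw [mem_homogeneousSubmodule] at hsd ht ⊢
          exact hsd.mul ht
        · intro x y _ _ hx hy
          rw [smul_add]; exact add_mem hx hy
        · intro a v _ hv
          have hcomm : s • a • v = a • s • v := by
            rw [← algebraMap_smul (PolyRing n) a v, smul_smul, mul_comm, ← smul_smul,
              algebraMap_smul]
          rw [hcomm]
          exact Submodule.smul_mem _ _ hv
      · intro x y hx hy
        rw [smul_add]; exact add_mem hx hy
    intro x
    have hx : x ∈ Submodule.span (PolyRing n) (Set.range b) := by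
      rw [b.span_eq]; trivial
    refine Submodule.span_induction
      (p := fun v _ => v ∈ ⨆ k, Submodule.span ℂ (grSet P b k)) ?_ (zero_mem _) ?_ ?_ hx
    · rintro v ⟨i, rfl⟩
      refine Submodule.mem_iSup_of_mem 0 (Submodule.subset_span ?_)
      exact ⟨0, 1, i, by norm_num, isHomogeneous_one _ _, one_smul _ _⟩
    · intro x y _ _ hx hy; exact add_mem hx hy
    · intro s v _ hv
      have hs : s • v = s • v := rfl
      -- decompose s into homogeneous components
      have : s • v = ∑ d ∈ Finset.range (s.totalDegree + 1),
          homogeneousComponent d s • v := by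
        rw [← Finset.sum_smul, sum_homogeneousComponent]
      rw [this]
      exact Submodule.sum_mem _ fun d _ => hhom d _ (homogeneousComponent_mem d s) v hv

lemma surjGr_eq {P X : GrMod (polyGrading n)} (p : GrHom P X)
    (hp : Function.Surjective p.toFun) (k : ℤ) :
    X.gr k = (P.gr k).map (p.toFun.restrictScalars ℂ) := by
  refine gr_eq_of X.gr X.decomp (fun k => (P.gr k).map (p.toFun.restrictScalars ℂ)) ?_ ?_ k
  · rintro k x ⟨y, hy, rfl⟩
    exact p.map_gr k y hy
  · intro x
    rw [← Submodule.map_iSup, P.decomp.submodule_iSup_eq_top, Submodule.map_top]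
    obtain ⟨y, rfl⟩ := hp x
    exact LinearMap.mem_range_self _ y

lemma gen0_neg {X P : GrMod (polyGrading n)} (p : GrHom P X)
    (hp : Function.Surjective p.toFun) {ι : Type} (b : Module.Basis ι (PolyRing n) P.M)
    (hb : ∀ j, b j ∈ P.gr 0) {k : ℤ} (hk : k < 0) : X.gr k = ⊥ := by
  rw [surjGr_eq p hp, freeGr_eq P b hb]
  have hempty : grSet P b k = ∅ := by
    ext x
    simp only [Set.mem_empty_iff_false, iff_false]
    rintro ⟨d, s, i, hd, _, _⟩
    omega
  rw [hempty, Submodule.span_empty, Submodule.map_bot]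

lemma gen0_ge2_le_Jsq {X P : GrMod (polyGrading n)} (p : GrHom P X)
    (hp : Function.Surjective p.toFun) {ι : Type} (b : Module.Basis ι (PolyRing n) P.M)
    (hb : ∀ j, b j ∈ P.gr 0) {k : ℤ} (hk : 2 ≤ k) :
    X.gr k ≤ (JsqSub n X).restrictScalars ℂ := by
  rw [surjGr_eq p hp, freeGr_eq P b hb]
  refine Submodule.map_le_iff_le_comap.mpr ?_
  rw [Submodule.span_le]
  rintro v ⟨d, s, i, hd, hs, rfl⟩
  have : p.toFun (s • b i) ∈ JsqSub n X := by
    rw [map_smul]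
    exact Submodule.smul_mem_smul (homogeneous_mem_Jsq (by omega) hs) Submodule.mem_top
  exact this

lemma Jsq_le_biSup {X P : GrMod (polyGrading n)} (p : GrHom P X)
    (hp : Function.Surjective p.toFun) {ι : Type} (b : Module.Basis ι (PolyRing n) P.M)
    (hb : ∀ j, b j ∈ P.gr 0) {x : X.M} (hx : x ∈ JsqSub n X) :
    x ∈ ⨆ j, (if j = (0:ℤ) ∨ j = 1 then (⊥ : Submodule ℂ X.M) else X.gr j) := by
  refine Submodule.smul_induction_on hx ?_ ?_
  · intro s hs m _
    have hm : m ∈ ⨆ k, X.gr k := by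
      rw [X.decomp.submodule_iSup_eq_top]; trivial
    refine Submodule.iSup_induction
      (motive := fun v => s • v ∈ ⨆ j, (if j = (0:ℤ) ∨ j = 1 then (⊥ : Submodule ℂ X.M) else X.gr j))
      _ hm ?_ (by show s • (0:_) ∈ _; rw [smul_zero]; exact zero_mem _) ?_
    · intro k y hy
      rcases lt_or_ge k 0 with hk | hk
      · rw [gen0_neg p hp b hb hk, Submodule.mem_bot] at hy
        rw [hy, smul_zero]; exact zero_mem _
      · have hdecomp : s • y = ∑ d ∈ Finset.range (s.totalDegree + 1),
            homogeneousComponent d s • y := by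
          rw [← Finset.sum_smul, sum_homogeneousComponent]
        rw [hdecomp]
        refine Submodule.sum_mem _ fun d _ => ?_
        rcases le_or_gt (k + (d:ℤ)) 1 with hkd | hkd
        · have hd1 : d ≤ 1 := by omega
          rw [homogeneousComponent_eq_zero_of_mem_Jsq hs hd1, zero_smul]
          exact zero_mem _
        · have hmem := X.smul_mem' d k _ (homogeneousComponent_mem d s) y hy
          refine Submodule.mem_iSup_of_mem (k + d) ?_
          rw [if_neg (by omega)]
          exact hmem
    · intro a c ha hc
      rw [smul_add]; exact add_mem ha hc
  · intro a c ha hc; exact add_mem ha hc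

lemma disj01 {X P : GrMod (polyGrading n)} (p : GrHom P X)
    (hp : Function.Surjective p.toFun) {ι : Type} (b : Module.Basis ι (PolyRing n) P.M)
    (hb : ∀ j, b j ∈ P.gr 0) {x : X.M}
    (h01 : x ∈ X.gr 0 ⊔ X.gr 1) (hx : x ∈ JsqSub n X) : x = 0 := by
  have hBx := Jsq_le_biSup p hp b hb hx
  have h0 : grProj X.gr X.decomp 0 x = 0 ∧ grProj X.gr X.decomp 1 x = 0 := by
    refine Submodule.iSup_induction
      (motive := fun v => grProj X.gr X.decomp 0 v = 0 ∧ grProj X.gr X.decomp 1 v = 0)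
      _ hBx ?_ (by simp) ?_
    · intro j y hy
      by_cases hj : j = (0:ℤ) ∨ j = 1
      · rw [if_pos hj, Submodule.mem_bot] at hy
        rw [hy]; simp
      · push_neg at hj
        rw [if_neg (by tauto)] at hy
        exact ⟨grProj_of_mem_ne _ hj.1 hy, grProj_of_mem_ne _ hj.2 hy⟩
    · intro a c ha hc
      refine ⟨?_, ?_⟩
      · rw [map_add, ha.1, hc.1, add_zero]
      · rw [map_add, ha.2, hc.2, add_zero]
  obtain ⟨a, ha, c, hc, rfl⟩ := Submodule.mem_sup.mp h01
  have h0a : grProj X.gr X.decomp 0 (a + c) = a := by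
    rw [map_add, grProj_of_mem_same _ ha, grProj_of_mem_ne _ (by norm_num : (1:ℤ) ≠ 0) hc,
      add_zero]
  have h1c : grProj X.gr X.decomp 1 (a + c) = c := by
    rw [map_add, grProj_of_mem_same _ hc, grProj_of_mem_ne _ (by norm_num : (0:ℤ) ≠ 1) ha,
      zero_add]
  rw [h0.1] at h0a
  rw [h0.2] at h1c
  rw [← h0a, ← h1c, add_zero]

end GrModAux

end AuxLemmas

set_option maxHeartbeats 2000000 in
/-- Let `M`, `E` be graded modules with linear presentations over
`S = ℂ[x₀,…,xₙ]` and let `h : M → E` be a degree-zero graded homomorphism such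
that the induced map `M/J²M → E/J²E` is a split monomorphism of `S/J²`-modules.
Then `h` itself is a split monomorphism: it admits a degree-zero left
inverse. -/
theorem stmt19 {n : ℕ} (M E : GrMod (polyGrading n))
    (hM : HasLinearPresentation M) (hE : HasLinearPresentation E)
    (h : GrHom M E)
    (hred : ∃ ρ : (E.M ⧸ JsqSub n E) →ₗ[PolyRing n] (M.M ⧸ JsqSub n M),
      ρ ∘ₗ redMap h = LinearMap.id) :
    ∃ q : GrHom E M, q.comp h = GrHom.id M := by
  classical
  obtain ⟨ρ, hρ⟩ := hred
  obtain ⟨P₁, P₀, f, p, hP₁, hP₀, psurj, pex⟩ := hM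
  obtain ⟨Q₁, Q₀, g, π, hQ₁, hQ₀, πsurj, πex⟩ := hE
  obtain ⟨ι₀, bP, hbP⟩ := hP₀
  obtain ⟨κ₀, bQ, hbQ⟩ := hQ₀
  obtain ⟨κ₁, bQ1, hbQ1⟩ := hQ₁
  set κM : M.M →ₗ[PolyRing n] M.M ⧸ JsqSub n M := (JsqSub n M).mkQ with hκM
  set κE : E.M →ₗ[PolyRing n] E.M ⧸ JsqSub n E := (JsqSub n E).mkQ with hκE
  set W : Submodule ℂ M.M := M.gr 0 ⊔ M.gr 1 with hW
  set eW : W →ₗ[ℂ] (M.M ⧸ JsqSub n M) := (κM.restrictScalars ℂ) ∘ₗ W.subtype with heW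
  have heWapp : ∀ w : W, eW w = κM (w : M.M) := fun w => rfl
  have einj : Function.Injective eW := by
    have key : ∀ w : W, eW w = 0 → w = 0 := by
      intro w hw
      have hx : (w : M.M) ∈ JsqSub n M := by
        have h0 : κM (w : M.M) = 0 := hw
        rwa [hκM, Submodule.mkQ_apply, Submodule.Quotient.mk_eq_zero] at h0
      exact Subtype.ext (disj01 p psurj bP hbP w.2 hx)
    intro w w' hww
    have := key (w - w') (by rw [map_sub, hww, sub_self])
    rwa [sub_eq_zero] at this
  have esurj : Function.Surjective eW := by
    intro y
    obtain ⟨m, rfl⟩ := (JsqSub n M).mkQ_surjective y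
    have hm : m ∈ ⨆ k, M.gr k := by
      rw [M.decomp.submodule_iSup_eq_top]; trivial
    refine Submodule.iSup_induction (motive := fun v => ∃ w : W, eW w = κM v) _ hm ?_
      ⟨0, by rw [map_zero, map_zero]⟩ ?_
    · intro k y hy
      rcases lt_or_ge k 0 with hk | hk
      · rw [gen0_neg p psurj bP hbP hk, Submodule.mem_bot] at hy
        exact ⟨0, by rw [hy, map_zero, map_zero]⟩
      rcases lt_or_ge k 2 with hk2 | hk2
      · have hyW : y ∈ W := by
          have hk01 : k = 0 ∨ k = 1 := by omega
          rcases hk01 with rfl | rfl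
          · exact Submodule.mem_sup_left hy
          · exact Submodule.mem_sup_right hy
        exact ⟨⟨y, hyW⟩, rfl⟩
      · have hyJ : y ∈ JsqSub n M := gen0_ge2_le_Jsq p psurj bP hbP hk2 hy
        refine ⟨0, ?_⟩
        rw [map_zero, hκM, Submodule.mkQ_apply]
        exact ((Submodule.Quotient.mk_eq_zero _).mpr hyJ).symm
    · rintro a b ⟨wa, hwa⟩ ⟨wb, hwb⟩
      exact ⟨wa + wb, by rw [map_add, hwa, hwb, map_add]⟩
  set e : W ≃ₗ[ℂ] (M.M ⧸ JsqSub n M) := LinearEquiv.ofBijective eW ⟨einj, esurj⟩ with he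
  have heapp : ∀ w : W, e w = κM (w : M.M) := fun w => rfl
  set τ : (M.M ⧸ JsqSub n M) →ₗ[ℂ] M.M :=
    (grProj M.gr M.decomp 0) ∘ₗ W.subtype ∘ₗ e.symm.toLinearMap with hτ
  have hτapp : ∀ y, τ y = grProj M.gr M.decomp 0 ((e.symm y : W) : M.M) := fun y => rfl
  have hτmem : ∀ y, τ y ∈ M.gr 0 := fun y => by
    rw [hτapp]; exact grProj_mem _ _ _ _
  have hτP2 : ∀ m₀ ∈ M.gr 0, τ (κM m₀) = m₀ := by
    intro m₀ h0
    have h1 : e ⟨m₀, Submodule.mem_sup_left h0⟩ = κM m₀ := heapp _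
    have hsymm : e.symm (κM m₀) = ⟨m₀, Submodule.mem_sup_left h0⟩ := by
      rw [← h1, LinearEquiv.symm_apply_apply]
    rw [hτapp, hsymm]
    exact grProj_of_mem_same _ h0
  have hτP3 : ∀ (y : M.M ⧸ JsqSub n M) (s : PolyRing n), s ∈ polyGrading n 1 →
      s • y = κM (s • τ y) := by
    intro y s hs
    obtain ⟨a, ha, c, hc, hac⟩ := Submodule.mem_sup.mp (e.symm y).2
    have hy : κM ((e.symm y : W) : M.M) = y := by
      rw [← heapp, LinearEquiv.apply_symm_apply]
    have hτy : τ y = a := by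
      rw [hτapp, ← hac, map_add, grProj_of_mem_same _ ha,
        grProj_of_mem_ne _ (by norm_num : (1:ℤ) ≠ 0) hc, add_zero]
    have hsc : s • c ∈ JsqSub n M := by
      have h2 := M.smul_mem' 1 1 s hs c hc
      have h2' : s • c ∈ M.gr 2 := by
        have hcast : (1 + ((1:ℕ):ℤ)) = 2 := by norm_num
        rwa [hcast] at h2
      exact gen0_ge2_le_Jsq p psurj bP hbP le_rfl h2'
    calc s • y = κM (s • ((e.symm y : W) : M.M)) :=
          (congrArg (fun t => s • t) hy.symm).trans (map_smul κM s _).symm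
      _ = κM (s • a) + κM (s • c) := by rw [← hac, smul_add, map_add]
      _ = κM (s • a) := by
          have : κM (s • c) = 0 := by
            rw [hκM, Submodule.mkQ_apply]
            exact (Submodule.Quotient.mk_eq_zero _).mpr hsc
          rw [this, add_zero]
      _ = κM (s • τ y) := by rw [hτy]
  set ρ₀ : E.M →ₗ[ℂ] M.M := τ ∘ₗ (ρ.restrictScalars ℂ) ∘ₗ (κE.restrictScalars ℂ) with hρ₀
  have hρ₀app : ∀ x : E.M, ρ₀ x = τ (ρ (κE x)) := fun x => rfl
  set Q : Q₀.M →ₗ[PolyRing n] M.M := bQ.constr ℂ (fun i => ρ₀ (π.toFun (bQ i))) with hQdef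
  have hQb : ∀ i, Q (bQ i) = ρ₀ (π.toFun (bQ i)) := fun i => bQ.constr_basis ℂ _ i
  have hcomm : ∀ m : M.M, κE (h.toFun m) = redMap h (κM m) := by
    intro m
    rw [hκM, hκE, Submodule.mkQ_apply, Submodule.mkQ_apply]
    rfl
  -- Q on degree-zero elements
  have hQ0 : ∀ z ∈ Q₀.gr 0, Q z = ρ₀ (π.toFun z) := by
    intro z hz
    rw [freeGr_eq Q₀ bQ hbQ 0] at hz
    refine Submodule.span_induction (p := fun v _ => Q v = ρ₀ (π.toFun v)) ?_
      (by show Q 0 = ρ₀ (π.toFun 0); rw [map_zero, map_zero, map_zero]) ?_ ?_ hz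
    · rintro v ⟨d, s, i, hd, hs, rfl⟩
      have hd0 : d = 0 := by omega
      subst hd0
      obtain ⟨a, rfl⟩ := exists_C_of_mem_zero hs
      rw [algebraMap_smul, LinearMap.map_smul_of_tower, hQb, LinearMap.map_smul_of_tower, map_smul]
    · intro x y _ _ hx hy
      rw [map_add, map_add, map_add, hx, hy]
    · intro a v _ hv
      rw [LinearMap.map_smul_of_tower, LinearMap.map_smul_of_tower, map_smul, hv]
  -- Q is graded
  have hQgr : ∀ (k : ℤ), ∀ z ∈ Q₀.gr k, Q z ∈ M.gr k := by
    intro k z hz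
    rw [freeGr_eq Q₀ bQ hbQ k] at hz
    refine Submodule.span_induction (p := fun v _ => Q v ∈ M.gr k) ?_
      (by show Q 0 ∈ M.gr k; rw [map_zero]; exact zero_mem _) ?_ ?_ hz
    · rintro v ⟨d, s, i, hd, hs, rfl⟩
      rw [map_smul, hQb]
      have := M.smul_mem' d 0 s hs _ (hτmem (ρ (κE (π.toFun (bQ i)))))
      rwa [zero_add, hd] at this
    · intro x y _ _ hx hy
      rw [map_add]; exact add_mem hx hy
    · intro a v _ hv
      rw [LinearMap.map_smul_of_tower]
      exact Submodule.smul_mem _ _ hv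
  -- key compatibility in degree 1
  have hkey : ∀ z ∈ Q₀.gr 1, κM (Q z) = ρ (κE (π.toFun z)) := by
    intro z hz
    rw [freeGr_eq Q₀ bQ hbQ 1] at hz
    refine Submodule.span_induction (p := fun v _ => κM (Q v) = ρ (κE (π.toFun v))) ?_
      (by show κM (Q 0) = ρ (κE (π.toFun 0)); rw [map_zero, map_zero, map_zero, map_zero, map_zero]) ?_ ?_ hz
    · rintro v ⟨d, s, i, hd, hs, rfl⟩
      have hd1 : d = 1 := by omega
      subst hd1
      rw [map_smul, hQb, hρ₀app, ← hτP3 _ s hs, map_smul, map_smul, map_smul]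
    · intro x y _ _ hx hy
      rw [map_add, map_add, map_add, map_add, map_add, hx, hy]
    · intro a v _ hv
      rw [LinearMap.map_smul_of_tower, LinearMap.map_smul_of_tower, LinearMap.map_smul_of_tower, LinearMap.map_smul_of_tower,
        LinearMap.map_smul_of_tower, hv]
  -- Q kills ker π
  have hker : LinearMap.ker π.toFun ≤ LinearMap.ker Q := by
    rw [← πex]
    rintro x ⟨y, rfl⟩
    have hy : y ∈ Submodule.span (PolyRing n) (Set.range bQ1) := by
      rw [bQ1.span_eq]; trivial
    have key : Q (g.toFun y) = 0 := by
      refine Submodule.span_induction (p := fun v _ => Q (g.toFun v) = 0) ?_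
        (by show Q (g.toFun 0) = 0; rw [map_zero, map_zero]) ?_ ?_ hy
      · rintro v ⟨j, rfl⟩
        have h1 : g.toFun (bQ1 j) ∈ Q₀.gr 1 := g.map_gr 1 _ (hbQ1 j)
        have h2 : π.toFun (g.toFun (bQ1 j)) = 0 := by
          have : g.toFun (bQ1 j) ∈ LinearMap.ker π.toFun := by
            rw [← πex]; exact LinearMap.mem_range_self _ _
          exact this
        have h3 : κM (Q (g.toFun (bQ1 j))) = 0 := by
          rw [hkey _ h1, h2, map_zero, map_zero]
        have h4 : Q (g.toFun (bQ1 j)) ∈ JsqSub n M := by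
          rw [hκM, Submodule.mkQ_apply] at h3
          exact (Submodule.Quotient.mk_eq_zero _).mp h3
        exact disj01 p psurj bP hbP (Submodule.mem_sup_right (hQgr 1 _ h1)) h4
      · intro x y _ _ hx hy
        rw [map_add, map_add, hx, hy, add_zero]
      · intro s v _ hv
        rw [map_smul, map_smul, hv, smul_zero]
    exact key
  -- descend Q to a map q' : E → M
  set eπ := LinearMap.quotKerEquivOfSurjective π.toFun πsurj with heπ
  set q' : E.M →ₗ[PolyRing n] M.M :=
    ((LinearMap.ker π.toFun).liftQ Q hker) ∘ₗ eπ.symm.toLinearMap with hq'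
  have hq'π : ∀ x : Q₀.M, q' (π.toFun x) = Q x := by
    intro x
    have h1 : eπ (Submodule.Quotient.mk x) = π.toFun x := rfl
    have h2 : eπ.symm (π.toFun x) = Submodule.Quotient.mk x := by
      rw [← h1, LinearEquiv.symm_apply_apply]
    show ((LinearMap.ker π.toFun).liftQ Q hker) (eπ.symm (π.toFun x)) = Q x
    rw [h2, Submodule.liftQ_apply]
  have hq'gr : ∀ i, ∀ m ∈ E.gr i, q' m ∈ M.gr i := by
    intro i m hm
    rw [surjGr_eq π πsurj i] at hm
    obtain ⟨z, hz, rfl⟩ := hm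
    have : (π.toFun.restrictScalars ℂ) z = π.toFun z := rfl
    rw [this, hq'π]
    exact hQgr i z hz
  refine ⟨⟨q', hq'gr⟩, ?_⟩
  have hmain : ∀ m₀ ∈ M.gr 0, q' (h.toFun m₀) = m₀ := by
    intro m₀ h0
    have hE0 : h.toFun m₀ ∈ E.gr 0 := h.map_gr 0 m₀ h0
    rw [surjGr_eq π πsurj 0] at hE0
    obtain ⟨z, hz, hzeq⟩ := hE0
    have hzeq' : π.toFun z = h.toFun m₀ := hzeq
    rw [← hzeq', hq'π, hQ0 z hz, hρ₀app, hzeq', hcomm m₀]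
    have hid : ρ (redMap h (κM m₀)) = κM m₀ := by
      have := congrArg (fun φ => φ (κM m₀)) hρ
      simpa using this
    rw [hid]
    exact hτP2 m₀ h0
  apply GrHom.ext
  show q' ∘ₗ h.toFun = LinearMap.id
  apply LinearMap.ext
  intro m
  obtain ⟨x, rfl⟩ := psurj m
  have hx : x ∈ Submodule.span (PolyRing n) (Set.range bP) := by
    rw [bP.span_eq]; trivial
  show q' (h.toFun (p.toFun x)) = p.toFun x
  refine Submodule.span_induction (p := fun v _ => q' (h.toFun (p.toFun v)) = p.toFun v) ?_
    (by show q' (h.toFun (p.toFun 0)) = p.toFun 0; rw [map_zero, map_zero, map_zero]) ?_ ?_ hx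
  · rintro v ⟨j, rfl⟩
    exact hmain (p.toFun (bP j)) (p.map_gr 0 _ (hbP j))
  · intro a b _ _ ha hb
    rw [map_add, map_add, map_add, ha, hb]
  · intro s v _ hv
    rw [map_smul, map_smul, map_smul, hv]
end
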